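/- arXiv:2306.05378 — 12 statements merged into one kernel-verified Lean document; each statement's English description precedes it below -/
import Mathlib

section
/- Let R be a Noetherian F-finite commutative ring of characteristic p, let q = p^r, and let (M, κ) be an r-Cartier module over R. For each integer j ≥ 1 fix finitely many elements λ_{1,j}, …, λ_{n_j,j} ∈ R such that every element of R can be written as a finite sum ∑_i a_i^{q^j} λ_{i,j} with a_i ∈ R (such families exist by F-finiteness). Then an element m ∈ M is contained in a finitely generated Cartier submodule of M if and only if there exists j ≥ 1 such that for every 1 ≤ i ≤ n_j there exist elements α_0, …, α_{j−1} ∈ R with κ^j(λ_{i,j} • m) + ∑_{k=0}^{j−1} κ^k(α_k • m) = 0. -/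
open Function

section Aux

variable {R : Type*} [CommRing R] {M : Type*} [AddCommGroup M] [Module R M]

theorem kIter_add (κ : M → M) (hadd : ∀ x y : M, κ (x + y) = κ x + κ y) :
    ∀ (k : ℕ) (x y : M), κ^[k] (x + y) = κ^[k] x + κ^[k] y := by
  intro k
  induction k with
  | zero => intro x y; simp
  | succ n ih =>
      intro x y
      simp only [Function.iterate_succ_apply, hadd, ih]

/-- `κ^[k]` as an additive monoid hom. -/
def kIter (κ : M → M) (hadd : ∀ x y : M, κ (x + y) = κ x + κ y) (k : ℕ) : M →+ M :=
  AddMonoidHom.mk' (κ^[k]) (kIter_add κ hadd k)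

theorem kIter_zero (κ : M → M) (hadd : ∀ x y : M, κ (x + y) = κ x + κ y) (k : ℕ) :
    κ^[k] (0 : M) = 0 := map_zero (kIter κ hadd k)

theorem kIter_neg (κ : M → M) (hadd : ∀ x y : M, κ (x + y) = κ x + κ y) (k : ℕ) (x : M) :
    κ^[k] (-x) = -κ^[k] x := map_neg (kIter κ hadd k) x

theorem kIter_sum (κ : M → M) (hadd : ∀ x y : M, κ (x + y) = κ x + κ y) (k : ℕ)
    {ι : Type*} (s : Finset ι) (f : ι → M) :
    κ^[k] (∑ i ∈ s, f i) = ∑ i ∈ s, κ^[k] (f i) := map_sum (kIter κ hadd k) f s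

theorem kIter_semi (p r : ℕ) (κ : M → M)
    (hsemi : ∀ (a : R) (x : M), κ (a ^ p ^ r • x) = a • κ x) :
    ∀ (k : ℕ) (a : R) (x : M), κ^[k] ((a ^ (p ^ r) ^ k) • x) = a • κ^[k] x := by
  intro k
  induction k with
  | zero => intro a x; simp
  | succ n ih =>
      intro a x
      have h1 : (a : R) ^ (p ^ r) ^ (n + 1) = (a ^ (p ^ r) ^ n) ^ p ^ r := by
        rw [pow_succ, pow_mul]
      rw [Function.iterate_succ_apply, h1, hsemi, ih, ← Function.iterate_succ_apply]

variable (p r : ℕ) (κ : M → M)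
  (hadd : ∀ x y : M, κ (x + y) = κ x + κ y)
  (hsemi : ∀ (a : R) (x : M), κ (a ^ p ^ r • x) = a • κ x)
  (m : M)

/-- The submodule `∑_{k<j} κ^k(R • m)`. -/
def NN (j : ℕ) : Submodule R M where
  carrier := {x | ∃ β : ℕ → R, x = ∑ k ∈ Finset.range j, κ^[k] (β k • m)}
  zero_mem' := ⟨0, by
    simp only [Pi.zero_apply, zero_smul]
    rw [Finset.sum_congr rfl fun k _ => kIter_zero κ hadd k, Finset.sum_const_zero]⟩
  add_mem' := by
    rintro x y ⟨β, rfl⟩ ⟨γ, rfl⟩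
    refine ⟨β + γ, ?_⟩
    rw [← Finset.sum_add_distrib]
    refine Finset.sum_congr rfl fun k _ => ?_
    rw [Pi.add_apply, add_smul, kIter_add κ hadd]
  smul_mem' := by
    rintro c x ⟨β, rfl⟩
    refine ⟨fun k => c ^ (p ^ r) ^ k * β k, ?_⟩
    rw [Finset.smul_sum]
    refine Finset.sum_congr rfl fun k _ => ?_
    rw [mul_smul, kIter_semi p r κ hsemi]

theorem mem_NN_of_lt {k j : ℕ} (h : k < j) (a : R) :
    κ^[k] (a • m) ∈ NN p r κ hadd hsemi m j := by
  classical
  refine ⟨fun l => if l = k then a else 0, ?_⟩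
  rw [Finset.sum_eq_single_of_mem k (Finset.mem_range.mpr h)]
  · simp
  · intro l _ hl
    simp only [if_neg hl, zero_smul, kIter_zero κ hadd]

theorem m_mem_NN {j : ℕ} (hj : 1 ≤ j) : m ∈ NN p r κ hadd hsemi m j := by
  have h0 := mem_NN_of_lt p r κ hadd hsemi m hj (1 : R)
  simpa using h0

theorem NN_mono {j j' : ℕ} (h : j ≤ j') :
    NN p r κ hadd hsemi m j ≤ NN p r κ hadd hsemi m j' := by
  classical
  rintro x ⟨β, rfl⟩
  refine ⟨fun k => if k < j then β k else 0, ?_⟩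
  rw [← Finset.sum_subset (Finset.range_subset_range.mpr h)]
  · refine Finset.sum_congr rfl fun k hk => ?_
    simp only [if_pos (Finset.mem_range.mp hk)]
  · intro k _ hk
    simp only [if_neg (fun hc => hk (Finset.mem_range.mpr hc)), zero_smul, kIter_zero κ hadd]


theorem NN_iter_mem (n : ℕ → ℕ) (lam : ∀ j : ℕ, Fin (n j) → R)
    (hlam : ∀ j : ℕ, 1 ≤ j → ∀ x : R, ∃ a : Fin (n j) → R,
      x = ∑ i, a i ^ (p ^ r) ^ j * lam j i)
    (j : ℕ) (hj : 1 ≤ j)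
    (hi : ∀ i, κ^[j] (lam j i • m) ∈ NN p r κ hadd hsemi m j) :
    ∀ (k : ℕ) (a : R), κ^[k] (a • m) ∈ NN p r κ hadd hsemi m j := by
  intro k
  induction k using Nat.strong_induction_on with
  | _ k IH =>
    intro a
    rcases lt_or_ge k j with h | h
    · exact mem_NN_of_lt p r κ hadd hsemi m h a
    · obtain ⟨b, hb⟩ := hlam j hj a
      have hco : ∀ x : M, κ^[k] x = κ^[k - j] (κ^[j] x) := by
        intro x
        rw [← Function.iterate_add_apply, Nat.sub_add_cancel h]
      have key : κ^[k] (a • m) = ∑ i, κ^[k - j] (b i • κ^[j] (lam j i • m)) := by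
        rw [hb, Finset.sum_smul, kIter_sum κ hadd]
        refine Finset.sum_congr rfl fun i _ => ?_
        rw [mul_smul, hco, kIter_semi p r κ hsemi j]
      rw [key]
      apply Submodule.sum_mem
      intro i _
      obtain ⟨β, hβ⟩ := hi i
      rw [hβ, Finset.smul_sum, kIter_sum κ hadd]
      apply Submodule.sum_mem
      intro l hl
      have hsm : b i • κ^[l] (β l • m) = κ^[l] ((b i ^ (p ^ r) ^ l * β l) • m) := by
        rw [mul_smul, kIter_semi p r κ hsemi]
      rw [hsm, ← Function.iterate_add_apply]
      have hlt : (k - j) + l < k := by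
        have := Finset.mem_range.mp hl
        omega
      exact IH _ hlt _

theorem NN_kappa (j : ℕ)
    (hclo : ∀ (k : ℕ) (a : R), κ^[k] (a • m) ∈ NN p r κ hadd hsemi m j) :
    ∀ x ∈ NN p r κ hadd hsemi m j, κ x ∈ NN p r κ hadd hsemi m j := by
  rintro x ⟨β, rfl⟩
  have h1 : ∀ y : M, κ y = κ^[1] y := fun y => rfl
  rw [h1, kIter_sum κ hadd]
  apply Submodule.sum_mem
  intro k _
  rw [← h1]
  have h2 : κ (κ^[k] (β k • m)) = κ^[k + 1] (β k • m) :=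
    (Function.iterate_succ_apply' κ k _).symm
  rw [h2]
  exact hclo (k + 1) (β k)

theorem NN_fg (n : ℕ → ℕ) (lam : ∀ j : ℕ, Fin (n j) → R)
    (hlam : ∀ j : ℕ, 1 ≤ j → ∀ x : R, ∃ a : Fin (n j) → R,
      x = ∑ i, a i ^ (p ^ r) ^ j * lam j i)
    (j : ℕ) (hj : 1 ≤ j) : (NN p r κ hadd hsemi m j).FG := by
  classical
  set S : Set M := insert m
    (Set.range (fun t : (Σ l : Fin j, Fin (n l)) => κ^[(t.1 : ℕ)] (lam (t.1 : ℕ) t.2 • m)))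
    with hS
  have hfin : S.Finite := (Set.finite_range _).insert m
  refine ⟨hfin.toFinset, ?_⟩
  rw [Set.Finite.coe_toFinset]
  apply le_antisymm
  · rw [Submodule.span_le]
    rintro x hx
    rcases hx with rfl | ⟨t, rfl⟩
    · exact m_mem_NN p r κ hadd hsemi _ hj
    · exact mem_NN_of_lt p r κ hadd hsemi _ t.1.isLt _
  · rintro x ⟨β, rfl⟩
    apply Submodule.sum_mem
    intro k hk
    rcases Nat.eq_zero_or_pos k with rfl | hk1
    · simpa using Submodule.smul_mem _ (β 0) (Submodule.subset_span (Set.mem_insert m _))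
    · obtain ⟨b, hb⟩ := hlam k hk1 (β k)
      rw [hb, Finset.sum_smul, kIter_sum κ hadd]
      apply Submodule.sum_mem
      intro i _
      rw [mul_smul, kIter_semi p r κ hsemi]
      refine Submodule.smul_mem _ _ (Submodule.subset_span ?_)
      exact Or.inr ⟨⟨⟨k, Finset.mem_range.mp hk⟩, i⟩, rfl⟩

theorem mem_of_cartier (N : Submodule R M) (hst : ∀ x ∈ N, κ x ∈ N) (hm : m ∈ N) :
    ∀ (k : ℕ) (a : R), κ^[k] (a • m) ∈ N := by
  intro k
  induction k with
  | zero => intro a; simpa using N.smul_mem a hm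
  | succ t ih =>
      intro a
      rw [Function.iterate_succ_apply']
      exact hst _ (ih a)

theorem NN_le (N : Submodule R M) (hst : ∀ x ∈ N, κ x ∈ N) (hm : m ∈ N) (j : ℕ) :
    NN p r κ hadd hsemi m j ≤ N := by
  rintro x ⟨β, rfl⟩
  exact Submodule.sum_mem _ fun k _ => mem_of_cartier κ m N hst hm k (β k)

end Aux


/-- Let `R` be a Noetherian `F`-finite commutative ring of characteristic `p`,
`q = p ^ r`, and `(M, κ)` an `r`-Cartier module over `R`.  For each `j ≥ 1` fix elements
`lam j 1, …, lam j (n j)` of `R` such that every element of `R` is a sum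
`∑ i, (a i) ^ (q ^ j) * lam j i`.  Then `m ∈ M` lies in a finitely generated Cartier submodule
iff there is `j ≥ 1` such that for every `i` there are `α₀, …, α_{j-1} ∈ R` with
`κ^[j] (lam j i • m) + ∑ k, κ^[k] (α k • m) = 0`. -/
theorem stmt0 (p r : ℕ) (hp : p.Prime) (hr : 1 ≤ r)
    (R : Type*) [CommRing R] [CharP R p] [IsNoetherianRing R]
    (hFF : ∃ s : Finset R, ∀ x : R, ∃ a : R → R, x = ∑ i ∈ s, a i ^ p * i)
    (M : Type*) [AddCommGroup M] [Module R M]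
    (κ : M → M)
    (hadd : ∀ x y : M, κ (x + y) = κ x + κ y)
    (hsemi : ∀ (a : R) (x : M), κ (a ^ p ^ r • x) = a • κ x)
    (n : ℕ → ℕ) (lam : ∀ j : ℕ, Fin (n j) → R)
    (hlam : ∀ j : ℕ, 1 ≤ j → ∀ x : R, ∃ a : Fin (n j) → R,
      x = ∑ i, a i ^ (p ^ r) ^ j * lam j i)
    (m : M) :
    (∃ N : Submodule R M, N.FG ∧ (∀ x ∈ N, κ x ∈ N) ∧ m ∈ N) ↔
      ∃ j : ℕ, 1 ≤ j ∧ ∀ i : Fin (n j), ∃ α : Fin j → R,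
        κ^[j] (lam j i • m) + ∑ k : Fin j, κ^[(k : ℕ)] (α k • m) = 0 := by
  classical
  constructor
  · rintro ⟨N, hfg, hst, hm⟩
    have hNoeth : IsNoetherian R N := isNoetherian_of_fg_of_noetherian N hfg
    have hle : ∀ j, NN p r κ hadd hsemi m j ≤ N :=
      fun j => NN_le p r κ hadd hsemi m N hst hm j
    obtain ⟨t, ht⟩ := monotone_stabilizes_iff_noetherian.mpr hNoeth
      ⟨fun j => (NN p r κ hadd hsemi m (j + 1)).comap N.subtype,
       fun j j' h => Submodule.comap_mono (NN_mono p r κ hadd hsemi m (Nat.succ_le_succ h))⟩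
    have h2 := ht (t + 1) (Nat.le_succ t)
    change (NN p r κ hadd hsemi m (t + 1)).comap N.subtype =
      (NN p r κ hadd hsemi m (t + 1 + 1)).comap N.subtype at h2
    have heq : NN p r κ hadd hsemi m (t + 1) = NN p r κ hadd hsemi m (t + 2) := by
      have e1 := congrArg (Submodule.map N.subtype) h2
      rw [Submodule.map_comap_subtype, Submodule.map_comap_subtype,
        inf_eq_right.mpr (hle _), inf_eq_right.mpr (hle _)] at e1
      exact e1
    refine ⟨t + 1, by omega, fun i => ?_⟩
    have hx : κ^[t + 1] (lam (t + 1) i • m) ∈ NN p r κ hadd hsemi m (t + 1) := by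
      rw [heq]
      exact mem_NN_of_lt p r κ hadd hsemi m (by omega) _
    obtain ⟨β, hβ⟩ := hx
    refine ⟨fun k => -β (k : ℕ), ?_⟩
    have hβ' : κ^[t + 1] (lam (t + 1) i • m) = ∑ k : Fin (t + 1), κ^[(k : ℕ)] (β k • m) := by
      rw [hβ]
      exact (Fin.sum_univ_eq_sum_range (fun k => κ^[k] (β k • m)) (t + 1)).symm
    rw [hβ', ← Finset.sum_add_distrib]
    refine Finset.sum_eq_zero fun k _ => ?_
    simp only [neg_smul, kIter_neg κ hadd, add_neg_cancel]
  · rintro ⟨j, hj, hα⟩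
    have hi : ∀ i, κ^[j] (lam j i • m) ∈ NN p r κ hadd hsemi m j := by
      intro i
      obtain ⟨α, hα'⟩ := hα i
      have key : κ^[j] (lam j i • m) = ∑ k ∈ Finset.range j,
          κ^[k] ((fun k : ℕ => if h : k < j then -α ⟨k, h⟩ else 0) k • m) := by
        have e1 : ∑ k ∈ Finset.range j,
            κ^[k] ((fun k : ℕ => if h : k < j then -α ⟨k, h⟩ else 0) k • m)
            = ∑ k : Fin j, κ^[(k : ℕ)] ((-α k) • m) := by
          rw [← Fin.sum_univ_eq_sum_range
            (fun k : ℕ => κ^[k] ((fun k : ℕ => if h : k < j then -α ⟨k, h⟩ else 0) k • m)) j]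
          refine Finset.sum_congr rfl fun k _ => ?_
          simp [k.isLt]
        have e2 : ∑ k : Fin j, κ^[(k : ℕ)] ((-α k) • m)
            = -∑ k : Fin j, κ^[(k : ℕ)] (α k • m) := by
          rw [← Finset.sum_neg_distrib]
          exact Finset.sum_congr rfl fun k _ => by rw [neg_smul, kIter_neg κ hadd]
        rw [e1, e2]
        exact eq_neg_of_add_eq_zero_left hα'
      exact ⟨_, key⟩
    exact ⟨NN p r κ hadd hsemi m j,
      NN_fg p r κ hadd hsemi m n lam hlam j hj,
      NN_kappa p r κ hadd hsemi m j (NN_iter_mem p r κ hadd hsemi m n lam hlam j hj hi),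
      m_mem_NN p r κ hadd hsemi m hj⟩
end

section
/- Let R be a Noetherian F-finite commutative ring of characteristic p, let q = p^r, and let (M, κ) be an r-Cartier module over R such that κ^n = 0 for some n ≥ 0 (i.e., (M, κ) is nilpotent). Then (M, κ) is ind-coherent: every element of M lies in a finitely generated Cartier submodule. -/
/-- Over a Noetherian `F`-finite commutative ring `R` of characteristic `p`,
a nilpotent `r`-Cartier module `(M, κ)` (some iterate of `κ` vanishes) is ind-coherent:
every element of `M` lies in a finitely generated Cartier submodule. -/
theorem stmt1 (p r : ℕ) (hp : p.Prime) (hr : 1 ≤ r)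
    (R : Type*) [CommRing R] [CharP R p] [IsNoetherianRing R]
    (hFF : ∃ s : Finset R, ∀ x : R, ∃ a : R → R, x = ∑ i ∈ s, a i ^ p * i)
    (M : Type*) [AddCommGroup M] [Module R M]
    (κ : M → M)
    (hadd : ∀ x y : M, κ (x + y) = κ x + κ y)
    (hsemi : ∀ (a : R) (x : M), κ (a ^ p ^ r • x) = a • κ x)
    (hnil : ∃ n : ℕ, ∀ x : M, κ^[n] x = 0) :
    ∀ m : M, ∃ N : Submodule R M, N.FG ∧ (∀ x ∈ N, κ x ∈ N) ∧ m ∈ N := by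
  obtain ⟨n, hn⟩ := hnil
  haveI : Fact p.Prime := ⟨hp⟩
  obtain ⟨s, hs⟩ := hFF
  -- κ 0 = 0
  have hκ0 : κ 0 = 0 := by
    have h := hadd 0 0
    rw [add_zero] at h
    exact (add_eq_right.mp h.symm)
  -- κ commutes with finite sums
  have hsum : ∀ {ι : Type} (s' : Finset ι) (f : ι → M),
      κ (∑ i ∈ s', f i) = ∑ i ∈ s', κ (f i) := by
    intro ι s' f
    exact map_sum (AddMonoidHom.mk' κ hadd) f s'
  -- Step 1: every element of R is a sum of p^r-th powers times fixed generators
  have aux : ∀ j : ℕ, ∃ (k : ℕ) (t : Fin k → R),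
      ∀ x : R, ∃ b : Fin k → R, x = ∑ i, b i ^ p ^ (j + 1) * t i := by
    intro j
    induction j with
    | zero =>
      set e := Fintype.equivFin { y // y ∈ s } with he
      refine ⟨_, fun i => ((e.symm i : { y // y ∈ s }) : R), fun x => ?_⟩
      obtain ⟨a, ha⟩ := hs x
      refine ⟨fun i => a (e.symm i), ?_⟩
      have h1 : ∑ i, (fun y : { y // y ∈ s } => a (y : R) ^ p ^ (0 + 1) * (y : R)) (e.symm i)
          = ∑ y : { y // y ∈ s }, a (y : R) ^ p ^ (0 + 1) * (y : R) :=
        Fintype.sum_equiv e.symm _ _ (fun i => rfl)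
      simp only at h1
      rw [h1, Finset.sum_coe_sort s (fun i => a i ^ p ^ (0 + 1) * i)]
      simpa using ha
    | succ j ih =>
      obtain ⟨k, t, ht⟩ := ih
      set e := Fintype.equivFin ({ y // y ∈ s } × Fin k) with he
      refine ⟨_, fun i => t (e.symm i).2 ^ p * ((e.symm i).1 : R), fun x => ?_⟩
      obtain ⟨a, ha⟩ := hs x
      choose b hb using fun i : { y // y ∈ s } => ht (a i)
      refine ⟨fun i => b (e.symm i).1 (e.symm i).2, ?_⟩
      have h1 : ∑ i, (fun z : { y // y ∈ s } × Fin k =>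
            b z.1 z.2 ^ p ^ (j + 1 + 1) * (t z.2 ^ p * (z.1 : R))) (e.symm i)
          = ∑ z : { y // y ∈ s } × Fin k,
            b z.1 z.2 ^ p ^ (j + 1 + 1) * (t z.2 ^ p * (z.1 : R)) :=
        Fintype.sum_equiv e.symm _ _ (fun i => rfl)
      simp only at h1
      rw [h1, Fintype.sum_prod_type]
      rw [ha, ← Finset.sum_coe_sort s (fun i => a i ^ p * i)]
      refine Finset.sum_congr rfl fun i _ => ?_
      rw [hb i]
      have h2 : (∑ w, b i w ^ p ^ (j + 1) * t w) ^ p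
          = ∑ w, (b i w ^ p ^ (j + 1) * t w) ^ p :=
        map_sum (frobenius R p) _ _
      rw [h2, Finset.sum_mul]
      refine Finset.sum_congr rfl fun w _ => ?_
      rw [mul_pow, ← pow_mul, ← pow_succ]
      ring
  obtain ⟨k, t, ht⟩ : ∃ (k : ℕ) (t : Fin k → R),
      ∀ x : R, ∃ b : Fin k → R, x = ∑ i, b i ^ p ^ r * t i := by
    obtain ⟨r', rfl⟩ : ∃ r', r = r' + 1 := ⟨r - 1, (Nat.succ_pred_eq_of_pos hr).symm⟩
    exact aux r'
  intro m
  -- the nested elements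
  set elt : List (Fin k) → M := fun w => w.foldr (fun i x => κ (t i • x)) m with helt_def
  have helt_nil : elt [] = m := rfl
  have helt_cons : ∀ (i : Fin k) (w : List (Fin k)), elt (i :: w) = κ (t i • elt w) := fun _ _ => rfl
  -- iterated semilinearity
  have hsemi' : ∀ (j : ℕ) (a : R) (x : M), a • κ^[j] x = κ^[j] (a ^ (p ^ r) ^ j • x) := by
    intro j
    induction j with
    | zero => intro a x; simp
    | succ j ih =>
      intro a x
      rw [Function.iterate_succ_apply, Function.iterate_succ_apply,
        pow_succ, pow_mul, hsemi, ih]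
  -- every word lies in the image of the corresponding iterate
  have himg : ∀ w : List (Fin k), ∃ y : M, elt w = κ^[w.length] y := by
    intro w
    induction w with
    | nil => exact ⟨m, rfl⟩
    | cons i w ih =>
      obtain ⟨y, hy⟩ := ih
      refine ⟨t i ^ (p ^ r) ^ w.length • y, ?_⟩
      rw [helt_cons, hy, hsemi', List.length_cons, Function.iterate_succ_apply']
  -- words of length n are killed after a further κ
  have hzero : ∀ w : List (Fin k), w.length = n → ∀ c : R, κ (c • elt w) = 0 := by
    intro w hw c
    obtain ⟨y, hy⟩ := himg w
    rw [hy, hw, hn y, smul_zero, hκ0]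
  -- the submodule
  set S : Set M := elt '' {w : List (Fin k) | w.length ≤ n} with hS_def
  set N : Submodule R M := Submodule.span R S with hN_def
  have hSfin : S.Finite := (List.finite_length_le (Fin k) n).image elt
  have hmem : m ∈ N := Submodule.subset_span ⟨[], by simp, helt_nil⟩
  -- key: κ of any scalar multiple of a generator lies in N
  have hkey : ∀ g ∈ S, ∀ c : R, κ (c • g) ∈ N := by
    rintro g ⟨w, hw, rfl⟩ c
    obtain ⟨b, hb⟩ := ht c
    have expand : c • elt w = ∑ i, b i ^ p ^ r • (t i • elt w) := by
      rw [hb, Finset.sum_smul]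
      refine Finset.sum_congr rfl fun i _ => ?_
      rw [mul_smul]
    rw [expand, hsum, ]
    refine Submodule.sum_mem N fun i _ => ?_
    rw [hsemi]
    refine Submodule.smul_mem N _ ?_
    -- κ (t i • elt w) = elt (i :: w) ∈ N
    rw [← helt_cons]
    have hw' : w.length ≤ n := hw
    rcases lt_or_eq_of_le hw' with h | h
    · exact Submodule.subset_span ⟨i :: w, by simpa using h, rfl⟩
    · rw [helt_cons, hzero w h]
      exact Submodule.zero_mem N
  -- the submodule of elements x with κ (c • x) ∈ N for all c
  set N' : Submodule R M :=
    { carrier := {x | ∀ c : R, κ (c • x) ∈ N}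
      add_mem' := by
        intro x y hx hy c
        rw [smul_add, hadd]
        exact Submodule.add_mem N (hx c) (hy c)
      zero_mem' := by
        intro c
        rw [smul_zero, hκ0]
        exact Submodule.zero_mem N
      smul_mem' := by
        intro a x hx c
        rw [smul_smul]
        exact hx (c * a) } with hN'_def
  have hle : N ≤ N' := Submodule.span_le.mpr fun g hg => hkey g hg
  refine ⟨N, Submodule.fg_span hSfin, fun x hx => ?_, hmem⟩
  have := hle hx 1
  rwa [one_smul] at this
end

section
/- Let R be a Noetherian F-finite commutative ring of characteristic p, let q = p^r, let (N, κ) be an r-Cartier module over R, and let A ⊆ N be a Cartier submodule. If (A, κ|_A) is ind-coherent and the quotient N/A, with the induced r-Cartier structure, is ind-coherent, then (N, κ) is ind-coherent. (The class of ind-coherent Cartier modules is closed under extensions.) -/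
/-- An additive map commutes with finite sums. -/
lemma stmt2_aux_sum {N : Type*} [AddCommGroup N] (κ : N → N)
    (hadd : ∀ x y : N, κ (x + y) = κ x + κ y) {α : Type*} (t : Finset α) (f : α → N) :
    κ (∑ i ∈ t, f i) = ∑ i ∈ t, κ (f i) :=
  map_sum (AddMonoidHom.mk' κ hadd) f t

/-- Iterating `F`-finiteness: every element is a combination of finitely many fixed
elements with `p ^ k`-th power coefficients. -/
lemma stmt2_aux_ff {R : Type u} [CommRing R] (p : ℕ) (hp : p.Prime) [CharP R p]
    (s : Finset R) (hs : ∀ x : R, ∃ a : R → R, x = ∑ i ∈ s, a i ^ p * i) :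
    ∀ k : ℕ, ∃ (ι : Type u) (_ : Fintype ι) (g : ι → R),
      ∀ c : R, ∃ cc : ι → R, c = ∑ i, cc i ^ p ^ (k + 1) * g i := by
  haveI : Fact p.Prime := ⟨hp⟩
  intro k
  induction k with
  | zero =>
    refine ⟨{ i // i ∈ s }, inferInstance, fun i => (i : R), fun c => ?_⟩
    obtain ⟨a, ha⟩ := hs c
    refine ⟨fun i => a i, ?_⟩
    simp only [zero_add, pow_one]
    rw [ha, ← Finset.sum_coe_sort s (fun i => a i ^ p * i)]
  | succ k ih =>
    obtain ⟨ι, inst, g, hg⟩ := ih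
    letI := inst
    refine ⟨ι × { i // i ∈ s }, inferInstance,
      fun ij => (ij.2 : R) ^ p ^ (k + 1) * g ij.1, fun c => ?_⟩
    obtain ⟨cc, hcc⟩ := hg c
    choose a ha using fun i => hs (cc i)
    refine ⟨fun ij => a ij.1 ij.2, ?_⟩
    rw [Fintype.sum_prod_type, hcc]
    refine Finset.sum_congr rfl fun i _ => ?_
    have h1 : cc i ^ p ^ (k + 1)
        = ∑ j : { i // i ∈ s }, a i j ^ p ^ (k + 1 + 1) * (j : R) ^ p ^ (k + 1) := by
      rw [ha i, ← Finset.sum_coe_sort s (fun j => a i j ^ p * j), sum_pow_char_pow]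
      refine Finset.sum_congr rfl fun j _ => ?_
      rw [mul_pow, ← pow_mul]
      congr 1
      rw [pow_succ' p (k + 1)]
    rw [h1, Finset.sum_mul]
    refine Finset.sum_congr rfl fun j _ => ?_
    ring

/-- Over a Noetherian `F`-finite commutative ring `R` of characteristic `p`,
ind-coherent `r`-Cartier modules are closed under extensions: if `A ⊆ N` is a Cartier
submodule such that `A` (with the induced structure) and `N/A` (with the induced structure)
are ind-coherent, then `N` is ind-coherent. -/
theorem stmt2 (p r : ℕ) (hp : p.Prime) (hr : 1 ≤ r)
    (R : Type*) [CommRing R] [CharP R p] [IsNoetherianRing R]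
    (hFF : ∃ s : Finset R, ∀ x : R, ∃ a : R → R, x = ∑ i ∈ s, a i ^ p * i)
    (N : Type*) [AddCommGroup N] [Module R N]
    (κ : N → N)
    (hadd : ∀ x y : N, κ (x + y) = κ x + κ y)
    (hsemi : ∀ (a : R) (x : N), κ (a ^ p ^ r • x) = a • κ x)
    (A : Submodule R N) (hA : ∀ x ∈ A, κ x ∈ A)
    -- `A` with the induced Cartier structure is ind-coherent:
    (hAind : ∀ a ∈ A, ∃ P : Submodule R N, P ≤ A ∧ P.FG ∧ (∀ x ∈ P, κ x ∈ P) ∧ a ∈ P)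
    -- the induced Cartier structure on the quotient `N / A`:
    (κq : (N ⧸ A) → (N ⧸ A))
    (hκq : ∀ x : N, κq (A.mkQ x) = A.mkQ (κ x))
    -- `N / A` with the induced Cartier structure is ind-coherent:
    (hQind : ∀ z : N ⧸ A, ∃ Q : Submodule R (N ⧸ A), Q.FG ∧ (∀ y ∈ Q, κq y ∈ Q) ∧ z ∈ Q) :
    ∀ x : N, ∃ P : Submodule R N, P.FG ∧ (∀ y ∈ P, κ y ∈ P) ∧ x ∈ P := by
  classical
  obtain ⟨s, hs⟩ := hFF
  have hκ0 : κ 0 = 0 := by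
    simpa using map_zero (AddMonoidHom.mk' κ hadd)
  have κsum := fun {α : Type} (t : Finset α) (f : α → N) => stmt2_aux_sum κ hadd t f
  have κsumN := fun (t : Finset N) (f : N → N) => stmt2_aux_sum κ hadd t f
  obtain ⟨k, rfl⟩ : ∃ k, r = k + 1 := ⟨r - 1, by omega⟩
  obtain ⟨ι, inst, g, hg⟩ := stmt2_aux_ff p hp s hs k
  letI := inst
  have κsumι := fun (t : Finset ι) (f : ι → N) => stmt2_aux_sum κ hadd t f
  -- key semilinearity consequence
  have key : ∀ (c : R) (y : N) (P : Submodule R N),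
      (∀ i : ι, κ (g i • y) ∈ P) → κ (c • y) ∈ P := by
    intro c y P hP
    obtain ⟨cc, hcc⟩ := hg c
    rw [hcc, Finset.sum_smul, κsumι]
    refine Submodule.sum_mem _ fun i _ => ?_
    rw [mul_smul, hsemi]
    exact P.smul_mem _ (hP i)
  have claim2 : ∀ (G : Finset N) (P : Submodule R N),
      (∀ y ∈ G, ∀ i : ι, κ (g i • y) ∈ P) →
      ∀ u ∈ Submodule.span R (G : Set N), κ u ∈ P := by
    intro G P hGP u hu
    obtain ⟨f, -, hf⟩ := Submodule.mem_span_finset.1 hu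
    rw [← hf, κsumN]
    exact Submodule.sum_mem _ fun y hy => key (f y) y P (fun i => hGP y hy i)
  -- main construction
  intro x
  obtain ⟨Q, hQfg, hQstab, hzQ⟩ := hQind (A.mkQ x)
  obtain ⟨T, hT⟩ := hQfg
  choose y hy using fun t : { t // t ∈ T } => A.mkQ_surjective (t : N ⧸ A)
  set G : Finset N := Finset.image y Finset.univ with hG
  set P₀ : Submodule R N := Submodule.span R (G : Set N) with hP₀
  have himg : A.mkQ '' (G : Set N) = (T : Set (N ⧸ A)) := by
    ext z
    constructor
    · rintro ⟨w, hw, rfl⟩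
      simp only [hG, Finset.coe_image, Finset.coe_univ, Set.image_univ,
        Set.mem_range] at hw
      obtain ⟨t, rfl⟩ := hw
      rw [hy t]; exact t.2
    · intro hz
      exact ⟨y ⟨z, hz⟩, by simp [hG], hy _⟩
  have hmapP₀ : Submodule.map A.mkQ P₀ = Q := by
    rw [hP₀, Submodule.map_span, himg, hT]
  have hTQ : ∀ t : { t // t ∈ T }, (t : N ⧸ A) ∈ Q := fun t =>
    hT ▸ Submodule.subset_span t.2
  have hlift : ∀ (i : ι) (t : { t // t ∈ T }),
      ∃ u ∈ P₀, κ (g i • y t) - u ∈ A := by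
    intro i t
    have h1 : A.mkQ (κ (g i • y t)) ∈ Q := by
      rw [← hκq]
      have h2 : A.mkQ (g i • y t) = g i • (t : N ⧸ A) := by rw [map_smul, hy]
      rw [h2]
      exact hQstab _ (Q.smul_mem _ (hTQ t))
    rw [← hmapP₀] at h1
    obtain ⟨u, hu, hu2⟩ := h1
    refine ⟨u, hu, ?_⟩
    have := (Submodule.Quotient.eq A).1 hu2.symm
    simpa using this
  choose u hu a_mem using hlift
  choose B hBle hBfg hBstab hBmem using
    fun it : ι × { t // t ∈ T } => hAind _ (a_mem it.1 it.2)
  have hx1 : A.mkQ x ∈ Submodule.map A.mkQ P₀ := hmapP₀ ▸ hzQ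
  obtain ⟨w, hw, hw2⟩ := hx1
  have hxw : x - w ∈ A := by
    have := (Submodule.Quotient.eq A).1 hw2.symm
    simpa using this
  obtain ⟨Bx, hBxle, hBxfg, hBxstab, hBxmem⟩ := hAind _ hxw
  set Bbig : Submodule R N := (⨆ it, B it) ⊔ Bx with hBbig
  have hBbigstab : ∀ b ∈ Bbig, κ b ∈ Bbig := by
    intro b hb
    obtain ⟨b1, hb1, b2, hb2, rfl⟩ := Submodule.mem_sup.1 hb
    rw [hadd]
    refine Submodule.add_mem _ (Submodule.mem_sup_left ?_)
      (Submodule.mem_sup_right (hBxstab _ hb2))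
    refine Submodule.iSup_induction _ (motive := fun v => κ v ∈ ⨆ it, B it) hb1
      (fun it v hv => Submodule.mem_iSup_of_mem it (hBstab it v hv)) ?_ ?_
    · show κ 0 ∈ _
      rw [hκ0]; exact Submodule.zero_mem _
    · intro v w' hv hw'
      show κ (v + w') ∈ _
      rw [hadd]; exact Submodule.add_mem _ hv hw'
  refine ⟨P₀ ⊔ Bbig, ?_, ?_, ?_⟩
  · exact (Submodule.fg_span G.finite_toSet).sup
      ((Submodule.fg_iSup _ fun it => hBfg it).sup hBxfg)
  · intro v hv
    obtain ⟨v1, hv1, v2, hv2, rfl⟩ := Submodule.mem_sup.1 hv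
    rw [hadd]
    refine Submodule.add_mem _ ?_ (Submodule.mem_sup_right (hBbigstab _ hv2))
    refine claim2 G _ ?_ v1 hv1
    intro yy hyy i
    simp only [hG, Finset.mem_image, Finset.mem_univ, true_and] at hyy
    obtain ⟨t, -, rfl⟩ := hyy
    have hsplit : κ (g i • y t) = u i t + (κ (g i • y t) - u i t) := by abel
    rw [hsplit]
    exact Submodule.add_mem _ (Submodule.mem_sup_left (hu i t))
      (Submodule.mem_sup_right (Submodule.mem_sup_left
        (Submodule.mem_iSup_of_mem (i, t) (hBmem (i, t)))))
  · have hx2 : x = w + (x - w) := by abel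
    rw [hx2]
    exact Submodule.add_mem _ (Submodule.mem_sup_left hw)
      (Submodule.mem_sup_right (Submodule.mem_sup_right hBxmem))
end

section
/- Let R be a Noetherian F-finite integral domain of characteristic p, let L = Frac(R) be its fraction field, let q = p^r, and let n ≥ 1. Then for every r-Cartier structure κ on the R-module L^n (i.e., every additive map κ : L^n → L^n with κ(a^q • v) = a • κ(v) for all a ∈ R), the Cartier module (L^n, κ) is ind-coherent: every element of L^n lies in a finitely generated R-submodule that is stable under κ. -/
/-- Iterated F-finiteness: a finite generating set for `R` over its `q = p^r`-th powers,
indexed by `Fin m`. -/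
lemma fq_aux {p : ℕ} (hp : p.Prime) {R : Type*} [CommRing R] [CharP R p]
    (hFF : ∃ s : Finset R, ∀ x : R, ∃ a : R → R, x = ∑ i ∈ s, a i ^ p * i) :
    ∀ r : ℕ, 1 ≤ r → ∃ (m : ℕ) (g : Fin m → R), ∀ x : R, ∃ a : Fin m → R,
      x = ∑ j, a j ^ p ^ r * g j := by
  haveI : Fact p.Prime := ⟨hp⟩
  obtain ⟨s, hs⟩ := hFF
  have base : ∃ (m : ℕ) (g : Fin m → R), ∀ x : R, ∃ a : Fin m → R,
      x = ∑ j, a j ^ p * g j := by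
    refine ⟨s.card, fun j => (s.equivFin.symm j : R), fun x => ?_⟩
    obtain ⟨a, ha⟩ := hs x
    refine ⟨fun j => a (s.equivFin.symm j), ?_⟩
    rw [ha, ← Finset.sum_coe_sort s (fun i => a i ^ p * i)]
    exact (Equiv.sum_comp s.equivFin.symm (fun y : {x // x ∈ s} => a (y : R) ^ p * (y : R))).symm
  intro r hr
  induction r, hr using Nat.le_induction with
  | base =>
    obtain ⟨m, g, hg⟩ := base
    exact ⟨m, g, fun x => by simpa [pow_one] using hg x⟩
  | succ r hr ih =>
    obtain ⟨m, g, hg⟩ := ih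
    obtain ⟨m0, g0, hg0⟩ := base
    refine ⟨m0 * m, fun k => (g (finProdFinEquiv.symm k).2) ^ p * g0 (finProdFinEquiv.symm k).1,
      fun x => ?_⟩
    obtain ⟨b, hb⟩ := hg0 x
    choose a ha using fun j => hg (b j)
    refine ⟨fun k => a (finProdFinEquiv.symm k).1 (finProdFinEquiv.symm k).2, ?_⟩
    have key : x = ∑ y : Fin m0 × Fin m,
        a y.1 y.2 ^ p ^ (r + 1) * ((g y.2) ^ p * g0 y.1) := by
      rw [hb, Fintype.sum_prod_type]
      refine Finset.sum_congr rfl fun j _ => ?_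
      rw [ha j, sum_pow_char, Finset.sum_mul]
      refine Finset.sum_congr rfl fun j1 _ => ?_
      rw [mul_pow, ← pow_mul, ← pow_succ]
      ring
    rw [key]
    exact (Equiv.sum_comp finProdFinEquiv.symm
      (fun y : Fin m0 × Fin m => a y.1 y.2 ^ p ^ (r + 1) * ((g y.2) ^ p * g0 y.1))).symm

/-- Let `R` be a Noetherian `F`-finite integral domain of characteristic `p`,
`L = Frac R`, and `n ≥ 1`.  Every `r`-Cartier structure `κ` on the `R`-module `L^n` makes
`(L^n, κ)` an ind-coherent Cartier module: each vector lies in a finitely generated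
`R`-submodule stable under `κ`. -/
theorem stmt3 (p r : ℕ) (hp : p.Prime) (hr : 1 ≤ r)
    (R : Type*) [CommRing R] [IsDomain R] [CharP R p] [IsNoetherianRing R]
    (hFF : ∃ s : Finset R, ∀ x : R, ∃ a : R → R, x = ∑ i ∈ s, a i ^ p * i)
    (L : Type*) [Field L] [Algebra R L] [IsFractionRing R L]
    (n : ℕ) (hn : 1 ≤ n)
    (κ : (Fin n → L) → (Fin n → L))
    (hadd : ∀ x y : Fin n → L, κ (x + y) = κ x + κ y)
    (hsemi : ∀ (a : R) (v : Fin n → L), κ (a ^ p ^ r • v) = a • κ v) :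
    ∀ v : Fin n → L, ∃ N : Submodule R (Fin n → L), N.FG ∧ (∀ x ∈ N, κ x ∈ N) ∧ v ∈ N := by
  intro v
  have hq2 : 2 ≤ p ^ r := Nat.one_lt_pow (by omega) hp.one_lt
  obtain ⟨k, hk⟩ : ∃ k, p ^ r = k + 2 := ⟨p ^ r - 2, by omega⟩
  obtain ⟨m, g, hg⟩ := fq_aux hp hFF r hr
  set κ' : (Fin n → L) →+ (Fin n → L) := AddMonoidHom.mk' κ hadd with hκ'
  set e : Fin n → (Fin n → L) := fun i => Pi.single i 1 with he
  set Λ : Submodule R (Fin n → L) := Submodule.span R (Set.range e) with hΛ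
  have hmemΛ : ∀ (c : Fin n → R), (fun i => algebraMap R L (c i)) ∈ Λ := by
    intro c
    rw [hΛ, Submodule.mem_span_range_iff_exists_fun]
    refine ⟨c, funext fun j => ?_⟩
    simp [he, Pi.single_apply, Algebra.smul_def, mul_ite, Finset.sum_ite_eq]
  set t : Fin m × Fin n → (Fin n → L) := fun y => κ (g y.1 • e y.2) with ht
  have hκΛ : ∀ w ∈ Λ, κ w ∈ Submodule.span R (Set.range t) := by
    intro w hw
    rw [hΛ, Submodule.mem_span_range_iff_exists_fun] at hw
    obtain ⟨c, hc⟩ := hw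
    choose a ha using fun i => hg (c i)
    have hw' : w = ∑ i, ∑ j, (a i j) ^ p ^ r • (g j • e i) := by
      rw [← hc]
      refine Finset.sum_congr rfl fun i _ => ?_
      rw [ha i, Finset.sum_smul]
      refine Finset.sum_congr rfl fun j _ => ?_
      rw [mul_smul]
    have : κ w = ∑ i, ∑ j, a i j • t (j, i) := by
      calc κ w = κ' (∑ i, ∑ j, (a i j) ^ p ^ r • (g j • e i)) := by rw [← hw']; rfl
        _ = ∑ i, ∑ j, a i j • t (j, i) := by
            rw [map_sum]
            refine Finset.sum_congr rfl fun i _ => ?_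
            rw [map_sum]
            exact Finset.sum_congr rfl fun j _ => hsemi (a i j) (g j • e i)
    rw [this]
    refine Submodule.sum_mem _ fun i _ => Submodule.sum_mem _ fun j _ =>
      Submodule.smul_mem _ _ (Submodule.subset_span ⟨(j, i), rfl⟩)
  -- common denominator for v
  obtain ⟨d, hd⟩ := IsLocalization.exist_integer_multiples (nonZeroDivisors R) Finset.univ v
  have hd' : ∀ i, ∃ a : R, algebraMap R L a = (d : R) • v i :=
    fun i => RingHom.mem_range.mp (hd i (Finset.mem_univ i))
  choose dv hdv using hd'
  have hdvΛ : (d : R) • v ∈ Λ := by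
    have : (d : R) • v = fun i => algebraMap R L (dv i) := funext fun i => (hdv i).symm
    rw [this]; exact hmemΛ dv
  -- common denominator for the t's
  obtain ⟨c, hc⟩ := IsLocalization.exist_integer_multiples (nonZeroDivisors R) Finset.univ
    (fun y : (Fin m × Fin n) × Fin n => t y.1 y.2)
  have hc' : ∀ y : (Fin m × Fin n) × Fin n, ∃ a : R, algebraMap R L a = (c : R) • t y.1 y.2 :=
    fun y => RingHom.mem_range.mp (hc y (Finset.mem_univ y))
  choose ct hct using hc'
  have hctΛ : ∀ y : Fin m × Fin n, (c : R) • t y ∈ Λ := by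
    intro y
    have : (c : R) • t y = fun i => algebraMap R L (ct (y, i)) :=
      funext fun i => (hct (y, i)).symm
    rw [this]; exact hmemΛ fun i => ct (y, i)
  set c0 : R := (c : R) * (d : R) with hc0
  have hc00 : c0 ≠ 0 :=
    mul_ne_zero (nonZeroDivisors.coe_ne_zero c) (nonZeroDivisors.coe_ne_zero d)
  set G : L := algebraMap R L c0 with hG'
  have hG : G ≠ 0 := fun h => hc00 (IsFractionRing.injective R L (h.trans (map_zero _).symm))
  have hGq : (G : L) ^ p ^ r ≠ 0 := pow_ne_zero _ hG
  set u : L := (G ^ p ^ r)⁻¹ with hu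
  set F : (Fin n → L) →ₗ[R] (Fin n → L) :=
    { toFun := fun x => u • x
      map_add' := fun x y => smul_add u x y
      map_smul' := fun a x => (smul_comm a u x).symm } with hF
  set N : Submodule R (Fin n → L) := Λ.map F with hN
  have hΛFG : Λ.FG := Submodule.fg_def.mpr ⟨Set.range e, Set.finite_range e, rfl⟩
  have halg : ∀ (a : R) (x : Fin n → L), a • x = algebraMap R L a • x :=
    fun a x => (algebraMap_smul L a x).symm
  refine ⟨N, hΛFG.map F, ?_, ?_⟩
  · -- stability under κ
    intro x hx
    obtain ⟨w, hw, rfl⟩ := hx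
    have hFw : F w = u • w := rfl
    -- κ w = G • κ (u • w)
    have h1 : c0 ^ p ^ r • (u • w) = w := by
      rw [halg, map_pow, ← hG', smul_smul, hu, mul_inv_cancel₀ hGq, one_smul]
    have h2 : κ w = G • κ (u • w) := by
      rw [← halg]
      calc κ w = κ (c0 ^ p ^ r • (u • w)) := by rw [h1]
        _ = c0 • κ (u • w) := hsemi c0 (u • w)
    have h3 : κ (F w) = G⁻¹ • κ w := by
      rw [hFw, h2, smul_smul, inv_mul_cancel₀ hG, one_smul]
    rw [h3]
    -- it suffices that G⁻¹ • (span of t) ⊆ N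
    set F2 : (Fin n → L) →ₗ[R] (Fin n → L) :=
      { toFun := fun x => G⁻¹ • x
        map_add' := fun x y => smul_add _ x y
        map_smul' := fun a x => (smul_comm a G⁻¹ x).symm } with hF2
    have hsub : Submodule.span R (Set.range t) ≤ N.comap F2 := by
      rw [Submodule.span_le]
      rintro _ ⟨y, rfl⟩
      have hmem : c0 ^ (k + 1) • t y ∈ Λ := by
        have : c0 ^ (k + 1) = ((c : R) ^ k * (d : R) ^ (k + 1)) * (c : R) := by
          rw [hc0]; ring
        rw [this, mul_smul]
        exact Λ.smul_mem _ (hctΛ y)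
      have hval : F (c0 ^ (k + 1) • t y) = G⁻¹ • t y := by
        show u • (c0 ^ (k + 1) • t y) = G⁻¹ • t y
        rw [halg, map_pow, ← hG', smul_smul, hu]
        congr 1
        rw [hk, pow_succ]
        field_simp
      exact Submodule.mem_comap.mpr ⟨c0 ^ (k + 1) • t y, hmem, hval⟩
    exact hsub (hκΛ w hw)
  · -- v ∈ N
    have hmem : c0 ^ p ^ r • v ∈ Λ := by
      have : c0 ^ p ^ r = ((c : R) ^ p ^ r * (d : R) ^ (k + 1)) * (d : R) := by
        rw [hc0, hk]; ring
      rw [this, mul_smul]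
      exact Λ.smul_mem _ hdvΛ
    refine ⟨c0 ^ p ^ r • v, hmem, ?_⟩
    show u • (c0 ^ p ^ r • v) = v
    rw [halg, map_pow, ← hG', smul_smul, hu, inv_mul_cancel₀ hGq, one_smul]
end

section
/- Let R be a commutative ring of characteristic p, let q = p^r, let J be an injective R-module, let M ⊆ J be an R-submodule, and let κ : M → M be an r-Cartier structure on M (an additive map with κ(a^q • x) = a • κ(x) for all a ∈ R, x ∈ M). Then there exists an r-Cartier structure κ' : J → J on J (an additive map with κ'(a^q • y) = a • κ'(y) for all a ∈ R, y ∈ J) such that κ'(x) = κ(x) for every x ∈ M; i.e., any Cartier structure on a submodule of an injective module extends to a Cartier structure on the whole injective module. -/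
/-- Type synonym used to twist the module structure along a ring endomorphism. -/
def CartierTw (J : Type*) : Type _ := J

/-- The identity map from `J` to its twist. -/
def CartierTw.mk {J : Type*} (x : J) : CartierTw J := x

/-- The identity map from the twist of `J` back to `J`. -/
def CartierTw.out {J : Type*} (x : CartierTw J) : J := x

instance {J : Type*} [AddCommGroup J] : AddCommGroup (CartierTw J) :=
  inferInstanceAs (AddCommGroup J)

/-- Let `R` be a commutative ring of characteristic `p`, `J` an injective
`R`-module, `M ⊆ J` a submodule and `κ` an `r`-Cartier structure on `M`.  Then `κ` extends
to an `r`-Cartier structure `κ'` on all of `J`. -/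
theorem stmt5 (p r : ℕ) (hp : p.Prime) (hr : 1 ≤ r)
    (R : Type*) [CommRing R] [CharP R p]
    (J : Type*) [AddCommGroup J] [Module R J] [Module.Injective R J]
    (M : Submodule R J)
    (κ : M → M)
    (hadd : ∀ x y : M, κ (x + y) = κ x + κ y)
    (hsemi : ∀ (a : R) (x : M), κ (a ^ p ^ r • x) = a • κ x) :
    ∃ κ' : J → J,
      (∀ y z : J, κ' (y + z) = κ' y + κ' z) ∧
      (∀ (a : R) (y : J), κ' (a ^ p ^ r • y) = a • κ' y) ∧
      (∀ x : M, κ' (x : J) = ((κ x : M) : J)) := by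
  haveI : ExpChar R p := ExpChar.prime hp
  let φ : R →+* R := iterateFrobenius R p r
  have hφa : ∀ a : R, φ a = a ^ p ^ r := fun a => iterateFrobenius_def p r a
  letI modTwJ : Module R (CartierTw J) := Module.compHom J φ
  letI modTwM : Module R (CartierTw M) := Module.compHom M φ
  have smulTwJ : ∀ (a : R) (y : CartierTw J), (a • y).out = a ^ p ^ r • y.out := by
    intro a y
    rw [← hφa]
    rfl
  have smulTwM : ∀ (a : R) (x : CartierTw M), (a • x).out = a ^ p ^ r • x.out := by
    intro a x
    rw [← hφa]
    rfl
  -- the inclusion of the twisted M into the twisted J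
  let f : CartierTw M →ₗ[R] CartierTw J :=
    { toFun := fun x => CartierTw.mk ((x.out : M) : J)
      map_add' := fun x y => rfl
      map_smul' := by
        intro a x
        apply (congrArg CartierTw.mk ·.symm ▸ rfl : ∀ {u v : J}, u = v →
          CartierTw.mk u = CartierTw.mk v)
        show (((a • x).out : M) : J) = (a • CartierTw.mk ((x.out : M) : J)).out
        rw [smulTwM, smulTwJ]
        simp [CartierTw.mk, CartierTw.out]
        rfl }
  have hf : Function.Injective f := by
    intro x y hxy
    have : ((x.out : M) : J) = ((y.out : M) : J) := congrArg CartierTw.out hxy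
    exact Subtype.ext this
  -- κ as a linear map from the twisted M to J
  let g : CartierTw M →ₗ[R] J :=
    { toFun := fun x => ((κ x.out : M) : J)
      map_add' := by
        intro x y
        show ((κ (x.out + y.out) : M) : J) = ((κ x.out : M) : J) + ((κ y.out : M) : J)
        rw [hadd]
        rfl
      map_smul' := by
        intro a x
        show ((κ (a • x).out : M) : J) = a • ((κ x.out : M) : J)
        rw [show (a • x).out = a ^ p ^ r • x.out from smulTwM a x, hsemi]
        rfl }
  obtain ⟨h, hh⟩ := Module.Injective.out f hf g
  refine ⟨fun y => h (CartierTw.mk y), ?_, ?_, ?_⟩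
  · intro y z; exact h.map_add _ _
  · intro a y
    have key : CartierTw.mk (a ^ p ^ r • y) = a • CartierTw.mk y := by
      have := smulTwJ a (CartierTw.mk y)
      exact this.symm
    show h (CartierTw.mk (a ^ p ^ r • y)) = a • h (CartierTw.mk y)
    rw [key, h.map_smul]
  · intro x; exact hh (CartierTw.mk x)
end

section
/- Let R be a Noetherian F-finite commutative ring of characteristic p, let q = p^r, let 𝔭 ⊂ R be a prime ideal, and let K = Frac(R/𝔭), regarded as an R-module via R → R/𝔭 → K. Let E be an R-module such that every element of E is annihilated by some power of 𝔭, and such that for every i ≥ 0 the R-module Ann_E(𝔭^{i+1})/Ann_E(𝔭^i) is isomorphic, as an R-module, to a finite direct sum of copies of K (where Ann_E(𝔭^i) = {x ∈ E : 𝔭^i x = 0}). Then for every n ≥ 1 and every r-Cartier structure κ on the R-module E^n, the Cartier module (E^n, κ) is ind-coherent. -/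
lemma kappa_zero {M : Type*} [AddCommGroup M] (κ : M → M)
    (hadd : ∀ x y, κ (x + y) = κ x + κ y) : κ 0 = 0 := by
  have := hadd 0 0; simpa using this.symm

/-- T-trick: stability of spans under Cartier-type operators. -/
lemma spanStable {R M : Type*} [CommRing R] [AddCommGroup M] [Module R M]
    (κ : M → M) (hadd : ∀ x y, κ (x + y) = κ x + κ y)
    (N : Submodule R M) (S : Set M)
    (hS : ∀ x ∈ S, ∀ a : R, κ (a • x) ∈ N) :
    ∀ x ∈ Submodule.span R S, ∀ a : R, κ (a • x) ∈ N := by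
  have h0 : κ 0 = 0 := kappa_zero κ hadd
  let T : Submodule R M :=
    { carrier := {x | ∀ a : R, κ (a • x) ∈ N}
      add_mem' := by
        intro x y hx hy a
        rw [smul_add, hadd]
        exact N.add_mem (hx a) (hy a)
      zero_mem' := by intro a; simpa [h0] using N.zero_mem
      smul_mem' := by
        intro c x hx a
        rw [smul_smul]
        exact hx (a * c) }
  have hle : Submodule.span R S ≤ T := Submodule.span_le.mpr hS
  exact fun x hx => hle hx

/-- iterated F-finiteness -/
lemma ffq {p : ℕ} (hp : p.Prime) {R : Type*} [CommRing R] [CharP R p]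
    (hFF : ∃ s : Finset R, ∀ x : R, ∃ a : R → R, x = ∑ i ∈ s, a i ^ p * i) :
    ∀ r : ℕ, 1 ≤ r →
    ∃ (k : ℕ) (u : Fin k → R), ∀ x : R, ∃ c : Fin k → R, x = ∑ j, c j ^ p ^ r * u j := by
  haveI : Fact p.Prime := ⟨hp⟩
  obtain ⟨s, hs⟩ := hFF
  have base : ∃ (k : ℕ) (u : Fin k → R), ∀ x : R, ∃ c : Fin k → R,
      x = ∑ j, c j ^ p ^ 1 * u j := by
    refine ⟨s.card, fun j => (s.equivFin.symm j : R), fun x => ?_⟩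
    obtain ⟨a, ha⟩ := hs x
    refine ⟨fun j => a ((s.equivFin.symm j : R)), ?_⟩
    rw [ha, ← Finset.sum_coe_sort s, pow_one]
    exact (Equiv.sum_comp s.equivFin.symm (fun i => a (i : R) ^ p * (i : R))).symm
  intro r hr
  induction r with
  | zero => omega
  | succ e ih =>
    rcases Nat.lt_or_ge 1 (e+1) with h1 | h1
    swap
    · obtain ⟨k, u, hu⟩ := base
      have : e = 0 := by omega
      subst this
      exact ⟨k, u, hu⟩
    · have he : 1 ≤ e := by omega
      obtain ⟨k', u', hu'⟩ := ih he
      obtain ⟨k, u, hu⟩ := base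
      refine ⟨k' * k, fun j => (fun jj : Fin k' × Fin k => u jj.2 ^ p ^ e * u' jj.1)
        (finProdFinEquiv.symm j), fun x => ?_⟩
      obtain ⟨c, hc⟩ := hu' x
      choose d hd using fun j => hu (c j)
      refine ⟨fun j => (fun jj : Fin k' × Fin k => d jj.1 jj.2) (finProdFinEquiv.symm j), ?_⟩
      rw [Equiv.sum_comp (finProdFinEquiv.symm : Fin (k' * k) ≃ Fin k' × Fin k)
        (fun jj : Fin k' × Fin k => d jj.1 jj.2 ^ p ^ (e + 1) * (u jj.2 ^ p ^ e * u' jj.1)),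
        Fintype.sum_prod_type, hc]
      refine Finset.sum_congr rfl fun j _ => ?_
      rw [hd j]
      have frob : (∑ i, d j i ^ p ^ 1 * u i) ^ p ^ e
          = ∑ i, (d j i ^ p ^ 1 * u i) ^ p ^ e := by
        have h := map_sum (iterateFrobenius R p e) (fun i => d j i ^ p ^ 1 * u i) Finset.univ
        simp only [iterateFrobenius_def] at h
        exact h
      rw [frob, Finset.sum_mul]
      refine Finset.sum_congr rfl fun i _ => ?_
      rw [mul_pow, ← pow_mul]
      have hpe : p ^ 1 * p ^ e = p ^ (e + 1) := by
        rw [← pow_add, Nat.add_comm]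
      rw [hpe]
      ring

lemma commonDenom {R K : Type*} [CommRing R] [Field K] [Algebra R K]
    (hsurj : ∀ lam : K, ∃ b c : R, algebraMap R K c ≠ 0 ∧
      algebraMap R K c * lam = algebraMap R K b)
    {ι' : Type*} [Fintype ι'] [DecidableEq ι'] (F : ι' → K) :
    ∃ h : R, algebraMap R K h ≠ 0 ∧
      ∀ z, ∃ b : R, algebraMap R K h * F z = algebraMap R K b := by
  choose b c hc0 hbc using fun z => hsurj (F z)
  refine ⟨∏ z, c z, ?_, fun z => ?_⟩
  · rw [map_prod]; exact Finset.prod_ne_zero_iff.mpr fun z _ => hc0 z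
  · refine ⟨(∏ z' ∈ Finset.univ.erase z, c z') * b z, ?_⟩
    rw [← Finset.mul_prod_erase Finset.univ c (Finset.mem_univ z), map_mul, map_mul,
      mul_comm (algebraMap R K (c z)), mul_assoc, hbc z]

lemma fieldCase {R K : Type*} [CommRing R] [Field K] [Algebra R K]
    (q : ℕ) (hq : 2 ≤ q)
    (k : ℕ) (u : Fin k → R) (hu : ∀ a : R, ∃ c : Fin k → R, a = ∑ j, c j ^ q * u j)
    (hsurj : ∀ lam : K, ∃ b c : R, algebraMap R K c ≠ 0 ∧
      algebraMap R K c * lam = algebraMap R K b)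
    (ι : Type*) [Fintype ι] [DecidableEq ι]
    (κ : (ι → K) → (ι → K)) (hadd : ∀ x y, κ (x + y) = κ x + κ y)
    (hsemiK : ∀ (μ : K) (y : ι → K), κ (μ ^ q • y) = μ • κ y)
    (w : ι → K) :
    ∃ N : Submodule R (ι → K), N.FG ∧ (∀ x ∈ N, κ x ∈ N) ∧ w ∈ N := by
  set φ := algebraMap R K with hφ
  have hsemiR : ∀ (c : R) (y : ι → K), κ (c ^ q • y) = c • κ y := by
    intro c y
    have h1 : c ^ q • y = (φ c) ^ q • y := by
      rw [← map_pow, algebraMap_smul]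
    rw [h1, hsemiK, algebraMap_smul]
  have pi_decomp : ∀ y : ι → K, y = ∑ i, y i • (Pi.single i (1:K) : ι → K) := by
    intro y; funext i'; simp [Finset.sum_apply, Pi.single_apply]
  set bK : ι → (ι → K) := fun i => (Pi.single i (1:K) : ι → K) with hbK
  set G : Fin k → ι → (ι → K) := fun j i => κ (u j • bK i) with hG
  -- common denominator for all coordinates of all G j i and of w
  obtain ⟨h, hK0, hden⟩ := commonDenom hsurj
    (fun z : (Fin k × ι × ι) ⊕ ι => Sum.rec (fun t => G t.1 t.2.1 t.2.2) (fun i => w i) z)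
  set hK : K := φ h with hhK
  choose dG hdG using fun (j : Fin k) (i i' : ι) => hden (Sum.inl (j, i, i'))
  choose dw hdw using fun i : ι => hden (Sum.inr i)
  set S : Set (ι → K) := Set.range (fun i : ι => (hK⁻¹) ^ 2 • bK i) with hS
  set N : Submodule R (ι → K) := Submodule.span R S with hN
  have memN : ∀ (t : R) (i : ι), (φ t * (hK⁻¹) ^ 2) • bK i ∈ N := by
    intro t i
    have : (φ t * (hK⁻¹) ^ 2) • bK i = t • ((hK⁻¹) ^ 2 • bK i) := by
      rw [mul_smul, algebraMap_smul]
    rw [this]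
    exact N.smul_mem t (Submodule.subset_span ⟨i, rfl⟩)
  have coordG : ∀ (j : Fin k) (i i' : ι), G j i i' = hK⁻¹ * φ (dG j i i') := by
    intro j i i'
    have := hdG j i i'
    field_simp
    rw [mul_comm] at this
    exact this
  refine ⟨N, ⟨(Set.finite_range _).toFinset, by rw [Set.Finite.coe_toFinset]⟩, ?_, ?_⟩
  · -- stability
    have hstab := spanStable κ hadd N S ?_
    · intro x hx
      have := hstab x hx 1
      simpa using this
    · rintro x ⟨i, rfl⟩ a
      -- κ (a • (hK⁻¹^2 • bK i)) ∈ N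
      have key : a • ((hK⁻¹) ^ 2 • bK i) = (hK⁻¹) ^ q • ((h ^ (q - 2) * a) • bK i) := by
        match_scalars
        have hq2 : (algebraMap R K h) ^ (q - 2) * (algebraMap R K h) ^ 2
            = (algebraMap R K h) ^ q := by
          rw [← pow_add, Nat.sub_add_cancel hq]
        field_simp [show (algebraMap R K h) ≠ 0 from hK0]
        rw [hhK, hφ, one_div, inv_pow, ← hq2]
        field_simp
        rw [mul_assoc, mul_div_assoc, div_self (mul_ne_zero hK0 (pow_ne_zero _ hK0)), mul_one]
      rw [key, hsemiK]
      obtain ⟨c, hc⟩ := hu (h ^ (q - 2) * a)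
      rw [hc]
      have expand : (∑ j, c j ^ q * u j) • bK i = ∑ j, c j ^ q • (u j • bK i) := by
        rw [Finset.sum_smul]
        exact Finset.sum_congr rfl fun j _ => by rw [mul_smul]
      rw [expand]
      have κsum : κ (∑ j, c j ^ q • (u j • bK i)) = ∑ j, c j • G j i := by
        have := map_sum (AddMonoidHom.mk' κ hadd) (fun j => c j ^ q • (u j • bK i)) Finset.univ
        simp only [AddMonoidHom.mk'_apply] at this
        rw [this]
        exact Finset.sum_congr rfl fun j _ => hsemiR (c j) (u j • bK i)
      rw [κsum, Finset.smul_sum]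
      refine Submodule.sum_mem N fun j _ => ?_
      -- hK⁻¹ • (c j • G j i) ∈ N
      have hterm : hK⁻¹ • (c j • G j i) = ∑ i', (φ (c j * dG j i i') * (hK⁻¹) ^ 2) • bK i' := by
        conv_lhs => rw [pi_decomp (G j i)]
        rw [Finset.smul_sum, Finset.smul_sum]
        refine Finset.sum_congr rfl fun i' _ => ?_
        match_scalars
        rw [coordG j i i', map_mul]
        ring
      rw [hterm]
      exact Submodule.sum_mem N fun i' _ => memN (c j * dG j i i') i'
  · -- w ∈ N
    have coordw : ∀ i, w i = hK⁻¹ * φ (dw i) := by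
      intro i
      have h1 := hdw i
      field_simp
      rw [mul_comm] at h1
      exact h1
    have hw : w = ∑ i, (φ (dw i * h) * (hK⁻¹) ^ 2) • bK i := by
      conv_lhs => rw [pi_decomp w]
      refine Finset.sum_congr rfl fun i _ => ?_
      congr 1
      rw [coordw i, map_mul]
      field_simp
      ring
    rw [hw]
    exact Submodule.sum_mem N fun i _ => memN (dw i * h) i


lemma mem_torsSet {R E : Type*} [CommRing R] [AddCommGroup E] [Module R E]
    (s : Set R) (x : E) :
    x ∈ Submodule.torsionBySet R E s ↔ ∀ a ∈ s, a • x = 0 := by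
  rw [Submodule.mem_torsionBySet_iff]
  exact ⟨fun h a ha => h ⟨a, ha⟩, fun h a => h a a.2⟩

/-- Let `R` be a Noetherian `F`-finite commutative ring of characteristic
`p`, `𝔭 ⊂ R` a prime and `K = Frac (R/𝔭)` viewed as an `R`-module.  Let `E` be an
`R`-module such that every element is killed by a power of `𝔭` and all the layers
`Ann_E(𝔭^{i+1})/Ann_E(𝔭^i)` are finite direct sums of copies of `K`.  Then for every
`n ≥ 1`, every `r`-Cartier structure on `E^n` is ind-coherent. -/
theorem stmt6 (p r : ℕ) (hp : p.Prime) (hr : 1 ≤ r)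
    (R : Type*) [CommRing R] [CharP R p] [IsNoetherianRing R]
    (hFF : ∃ s : Finset R, ∀ x : R, ∃ a : R → R, x = ∑ i ∈ s, a i ^ p * i)
    (𝔭 : Ideal R) [𝔭.IsPrime]
    (K : Type*) [Field K] [Algebra (R ⧸ 𝔭) K] [IsFractionRing (R ⧸ 𝔭) K]
    [Algebra R K] [IsScalarTower R (R ⧸ 𝔭) K]
    (E : Type*) [AddCommGroup E] [Module R E]
    -- every element of `E` is annihilated by a power of `𝔭`:
    (htors : ∀ x : E, ∃ i : ℕ, x ∈ Submodule.torsionBySet R E ((𝔭 ^ i : Ideal R) : Set R))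
    -- each layer `Ann_E(𝔭^{i+1}) / Ann_E(𝔭^i)` is a finite direct sum of copies of `K`:
    (hlayers : ∀ i : ℕ, ∃ m : ℕ, Nonempty
      ((↥(Submodule.torsionBySet R E ((𝔭 ^ (i + 1) : Ideal R) : Set R)) ⧸
          (Submodule.comap
            (Submodule.torsionBySet R E ((𝔭 ^ (i + 1) : Ideal R) : Set R)).subtype
            (Submodule.torsionBySet R E ((𝔭 ^ i : Ideal R) : Set R))))
        ≃ₗ[R] (Fin m → K)))
    (n : ℕ) (hn : 1 ≤ n)
    (κ : (Fin n → E) → (Fin n → E))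
    (hadd : ∀ x y : Fin n → E, κ (x + y) = κ x + κ y)
    (hsemi : ∀ (a : R) (v : Fin n → E), κ (a ^ p ^ r • v) = a • κ v) :
    ∀ v : Fin n → E, ∃ N : Submodule R (Fin n → E), N.FG ∧ (∀ x ∈ N, κ x ∈ N) ∧ v ∈ N := by
  have h0 : κ 0 = 0 := kappa_zero κ hadd
  have hq : 2 ≤ p ^ r := by
    calc 2 ≤ p := hp.two_le
    _ = p ^ 1 := (pow_one p).symm
    _ ≤ p ^ r := Nat.pow_le_pow_right hp.pos hr
  obtain ⟨k, u, hu⟩ := ffq hp hFF r hr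
  -- main induction on torsion degree
  have main : ∀ i : ℕ, ∀ v : Fin n → E,
      (∀ j, v j ∈ Submodule.torsionBySet R E ((𝔭 ^ i : Ideal R) : Set R)) →
      ∃ N : Submodule R (Fin n → E), N.FG ∧ (∀ x ∈ N, κ x ∈ N) ∧ v ∈ N := by
    intro i
    induction i with
    | zero =>
      intro v hv
      have hv0 : v = 0 := by
        funext j
        have := (mem_torsSet _ _).mp (hv j) 1 (by simp)
        simpa using this
      refine ⟨⊥, Submodule.fg_bot, ?_, by simp [hv0]⟩
      intro x hx
      rw [Submodule.mem_bot] at hx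
      simp [hx, h0]
    | succ i ih =>
      match i, ih with
      | 0, _ =>
        intro v hv
        obtain ⟨m, ⟨e⟩⟩ := hlayers 0
        have hsurj : ∀ lam : K, ∃ b c : R, algebraMap R K c ≠ 0 ∧
            algebraMap R K c * lam = algebraMap R K b := by
          intro lam
          obtain ⟨⟨x, s⟩, hxs⟩ := IsLocalization.mk'_surjective (nonZeroDivisors (R ⧸ 𝔭)) lam
          obtain ⟨b, hb⟩ := Ideal.Quotient.mk_surjective (I := 𝔭) x
          obtain ⟨c, hc⟩ := Ideal.Quotient.mk_surjective (I := 𝔭) (s : R ⧸ 𝔭)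
          have hinj : Function.Injective (algebraMap (R ⧸ 𝔭) K) := IsFractionRing.injective _ _
          refine ⟨b, c, ?_, ?_⟩
          · rw [IsScalarTower.algebraMap_apply R (R ⧸ 𝔭) K, Ideal.Quotient.algebraMap_eq]
            have hne : (Ideal.Quotient.mk 𝔭) c ≠ 0 := by
              rw [hc]
              exact nonZeroDivisors.ne_zero s.2
            simpa using fun hcon => hne (hinj (by simpa using hcon))
          · rw [IsScalarTower.algebraMap_apply R (R ⧸ 𝔭) K,
              IsScalarTower.algebraMap_apply R (R ⧸ 𝔭) K,
              Ideal.Quotient.algebraMap_eq, hb, hc, ← hxs, mul_comm]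
            exact IsLocalization.mk'_spec _ _ _
        set T₁ := Submodule.torsionBySet R E ((𝔭 ^ (0 + 1) : Ideal R) : Set R) with hT₁
        have hQbot : Submodule.comap T₁.subtype
            (Submodule.torsionBySet R E ((𝔭 ^ 0 : Ideal R) : Set R)) = ⊥ := by
          have h00 : Submodule.torsionBySet R E ((𝔭 ^ 0 : Ideal R) : Set R) = ⊥ := by
            rw [eq_bot_iff]
            intro x hx
            have hx1 := (mem_torsSet _ _).mp hx 1 (by simp)
            simpa using hx1
          rw [h00, Submodule.comap_bot, Submodule.ker_subtype]
        let ψ : T₁ ≃ₗ[R] (Fin m → K) := (Submodule.quotEquivOfEqBot _ hQbot).symm.trans e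
        let incl : ((Fin n × Fin m) → K) →ₗ[R] (Fin n → E) :=
          LinearMap.pi (fun j => T₁.subtype ∘ₗ (ψ.symm.toLinearMap ∘ₗ
            LinearMap.pi (fun l => LinearMap.proj (j, l))))
        have hincl : ∀ (y : (Fin n × Fin m) → K) (j : Fin n),
            incl y j = (ψ.symm (fun l => y (j, l)) : E) := fun y j => rfl
        have hinclT : ∀ (y : (Fin n × Fin m) → K) (j : Fin n), incl y j ∈ T₁ := by
          intro y j
          rw [hincl]
          exact (ψ.symm (fun l => y (j, l))).2
        have hinj : Function.Injective incl := by
          intro y z hyz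
          funext i
          have h1 : incl y i.1 = incl z i.1 := by rw [hyz]
          rw [hincl, hincl] at h1
          have h2 : (fun l => y (i.1, l)) = (fun l => z (i.1, l)) :=
            ψ.symm.injective (Subtype.coe_injective h1)
          have h3 := congrFun h2 i.2
          simpa using h3
        have hM1 : ∀ x : Fin n → E, (∀ j, x j ∈ T₁) → ∀ j, κ x j ∈ T₁ := by
          intro x hx j
          rw [hT₁, mem_torsSet]
          intro a ha
          rw [SetLike.mem_coe] at ha
          have hzero : a ^ p ^ r • x = 0 := by
            funext j'
            have haq : a ^ p ^ r ∈ ((𝔭 ^ (0 + 1) : Ideal R) : Set R) := by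
              rw [SetLike.mem_coe]
              have hsplit : a ^ p ^ r = a ^ (p ^ r - 1) * a := by
                rw [← pow_succ, Nat.sub_add_cancel (by omega)]
              rw [hsplit]
              exact Ideal.mul_mem_left _ _ ha
            have hxj := (mem_torsSet _ _).mp (hT₁ ▸ hx j') _ haq
            calc (a ^ p ^ r • x) j' = a ^ p ^ r • x j' := rfl
            _ = 0 := hxj
          have hvec : a • κ x = 0 := by rw [← hsemi, hzero, h0]
          calc a • κ x j = (a • κ x) j := rfl
          _ = 0 := by rw [hvec]; rfl
        let κt : ((Fin n × Fin m) → K) → ((Fin n × Fin m) → K) :=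
          fun y => fun i => ψ ⟨κ (incl y) i.1, hM1 (incl y) (hinclT y) i.1⟩ i.2
        have hkey : ∀ y, incl (κt y) = κ (incl y) := by
          intro y
          funext j
          rw [hincl]
          show (ψ.symm (ψ ⟨κ (incl y) j, hM1 (incl y) (hinclT y) j⟩) : E) = κ (incl y) j
          rw [LinearEquiv.symm_apply_apply]
        have hκtadd : ∀ y z, κt (y + z) = κt y + κt z := by
          intro y z
          apply hinj
          rw [map_add, hkey, hkey, hkey, map_add, hadd]
        have hκtsemiR : ∀ (a : R) (y : (Fin n × Fin m) → K),
            κt (a ^ p ^ r • y) = a • κt y := by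
          intro a y
          apply hinj
          rw [map_smul, hkey, hkey, map_smul, hsemi]
        have hκtK : ∀ (μ : K) (y : (Fin n × Fin m) → K),
            κt (μ ^ p ^ r • y) = μ • κt y := by
          intro μ y
          obtain ⟨b, c, hc0, hbc⟩ := hsurj μ
          have e2 : (c : R) ^ p ^ r • μ ^ p ^ r • y = b ^ p ^ r • y := by
            rw [← algebraMap_smul K (c ^ p ^ r), smul_smul, ← algebraMap_smul K (b ^ p ^ r),
              map_pow, map_pow, ← mul_pow, hbc]
          have e3 : c • κt (μ ^ p ^ r • y) = b • κt y := by
            rw [← hκtsemiR, e2, hκtsemiR]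
          have e4 : algebraMap R K c • κt (μ ^ p ^ r • y)
              = algebraMap R K c • (μ • κt y) := by
            rw [algebraMap_smul, e3, ← algebraMap_smul K b, ← hbc, mul_smul]
          exact smul_right_injective _ hc0 e4
        obtain ⟨N', hN'FG, hN'stab, hN'mem⟩ := fieldCase (p ^ r) hq k u hu hsurj
          (Fin n × Fin m) κt hκtadd hκtK (fun i => ψ ⟨v i.1, hv i.1⟩ i.2)
        refine ⟨Submodule.map incl N', hN'FG.map incl, ?_, ?_⟩
        · rintro x ⟨y, hy, rfl⟩
          exact ⟨κt y, hN'stab y hy, hkey y⟩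
        · refine ⟨_, hN'mem, ?_⟩
          funext j
          rw [hincl]
          show (ψ.symm (ψ ⟨v j, hv j⟩) : E) = v j
          rw [LinearEquiv.symm_apply_apply]
      | (i' + 1), ih =>
        intro v hv
        -- the elements κ (u jj • v) have smaller torsion
        have hw : ∀ jj : Fin k, ∀ j,
            κ (u jj • v) j ∈ Submodule.torsionBySet R E ((𝔭 ^ (i' + 1) : Ideal R) : Set R) := by
          intro jj j
          rw [mem_torsSet]
          intro a ha
          rw [SetLike.mem_coe] at ha
          have hzero : a ^ p ^ r • (u jj • v) = 0 := by
            funext j'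
            have haq : a ^ p ^ r ∈ ((𝔭 ^ (i' + 1 + 1) : Ideal R) : Set R) := by
              rw [SetLike.mem_coe]
              have h1 : a ^ p ^ r ∈ (𝔭 ^ (i' + 1)) ^ (p ^ r) := Ideal.pow_mem_pow ha _
              refine Ideal.pow_le_pow_right ?_ (by rw [← pow_mul] at h1; exact h1)
              calc i' + 1 + 1 ≤ (i' + 1) * 2 := by omega
              _ ≤ (i' + 1) * p ^ r := Nat.mul_le_mul_left _ hq
            have := (mem_torsSet _ _).mp (hv j') _ haq
            calc (a ^ p ^ r • (u jj • v)) j' = a ^ p ^ r • (u jj • v j') := rfl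
            _ = u jj • (a ^ p ^ r • v j') := smul_comm _ _ _
            _ = 0 := by rw [this, smul_zero]
          have : a • κ (u jj • v) = 0 := by
            rw [← hsemi, hzero, h0]
          calc a • κ (u jj • v) j = (a • κ (u jj • v)) j := rfl
          _ = 0 := by rw [this]; rfl
        -- apply ih to each
        choose N' hFG' hstab' hmem' using fun jj : Fin k => ih (κ (u jj • v)) (hw jj)
        choose s' hs' using fun jj => hFG' jj
        set S : Set (Fin n → E) := insert v (⋃ jj : Fin k, (s' jj : Set (Fin n → E))) with hS
        have hSfin : S.Finite :=
          Set.Finite.insert v (Set.finite_iUnion fun jj => (s' jj).finite_toSet)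
        set N : Submodule R (Fin n → E) := Submodule.span R S with hN
        have hsub : ∀ jj, N' jj ≤ N := by
          intro jj
          rw [← hs' jj]
          apply Submodule.span_mono
          exact subset_trans (Set.subset_iUnion (fun jj => ((s' jj : Set (Fin n → E)))) jj)
            (Set.subset_insert _ _)
        have hstabN := spanStable κ hadd N S ?_
        · refine ⟨N, ⟨hSfin.toFinset, by rw [Set.Finite.coe_toFinset]⟩, ?_,
            Submodule.subset_span (Set.mem_insert _ _)⟩
          intro x hx
          have := hstabN x hx 1
          simpa using this
        · intro x hx a
          rcases hx with rfl | hx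
          · -- x = v
            obtain ⟨c, hc⟩ := hu a
            have expand : a • x = ∑ jj, (c jj) ^ p ^ r • (u jj • x) := by
              rw [hc, Finset.sum_smul]
              exact Finset.sum_congr rfl fun jj _ => by rw [mul_smul]
            rw [expand]
            have κsum : κ (∑ jj, (c jj) ^ p ^ r • (u jj • x)) = ∑ jj, c jj • κ (u jj • x) := by
              have hms := map_sum (AddMonoidHom.mk' κ hadd)
                (fun jj => (c jj) ^ p ^ r • (u jj • x)) Finset.univ
              simp only [AddMonoidHom.mk'_apply] at hms
              rw [hms]
              exact Finset.sum_congr rfl fun jj _ => hsemi (c jj) (u jj • x)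
            rw [κsum]
            exact Submodule.sum_mem N fun jj _ =>
              N.smul_mem _ (hsub jj (hmem' jj))
          · obtain ⟨St, ⟨jj, rfl⟩, hxS⟩ := hx
            have hxN : x ∈ N' jj := by
              rw [← hs' jj]; exact Submodule.subset_span hxS
            exact hsub jj (hstab' jj _ (Submodule.smul_mem _ a hxN))
  -- conclude from htors
  intro v
  choose iv hiv using fun j => htors (v j)
  set I : ℕ := Finset.univ.sup iv with hI
  apply main I v
  intro j
  rw [mem_torsSet]
  intro a ha
  rw [SetLike.mem_coe] at ha
  have hle : (𝔭 ^ I : Ideal R) ≤ 𝔭 ^ iv j :=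
    Ideal.pow_le_pow_right (Finset.le_sup (Finset.mem_univ j))
  exact (mem_torsSet _ _).mp (hiv j) a (hle ha)
end

section
/- Let R be a commutative Noetherian ring, let 𝔭 ⊂ R be a prime ideal, let R_𝔭 be the localization of R at 𝔭, and let κ(𝔭) = R_𝔭/𝔭R_𝔭 be the residue field. Let E be an R_𝔭-module which is injective as an R_𝔭-module and which contains an essential R_𝔭-submodule isomorphic to κ(𝔭), via an injective R_𝔭-linear map ι : κ(𝔭) → E (i.e., E is an injective hull of κ(𝔭) over R_𝔭). Then, regarding E as an R-module by restriction of scalars along R → R_𝔭: (a) E is injective as an R-module, and (b) the composite R-linear map R/𝔭 → κ(𝔭) → E is injective and its image is an essential R-submodule of E. In other words, E restricted to R is an injective hull of R/𝔭 over R. -/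
universe v w u

lemma aux_small_of_submodule_quotient {A : Type*} [Ring A] {M : Type*} [AddCommGroup M]
    [Module A M] (N : Submodule A M) [Small.{v} N] [Small.{v} (M ⧸ N)] : Small.{v} M := by
  have hmem : ∀ m : M, m - (N.mkQ m).out ∈ N := by
    intro m
    have h1 : N.mkQ ((N.mkQ m).out) = N.mkQ m := by
      exact Quotient.out_eq _
    have := (Submodule.Quotient.eq N).mp h1.symm
    simpa using this
  have hinj : Function.Injective
      (fun m : M => ((N.mkQ m, ⟨m - (N.mkQ m).out, hmem m⟩) : (M ⧸ N) × N)) := by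
    intro m m' h
    have h1 : N.mkQ m = N.mkQ m' := congrArg Prod.fst h
    have h2 : m - (N.mkQ m).out = m' - (N.mkQ m').out :=
      congrArg (fun p => ((p.2 : N) : M)) h
    rw [h1] at h2
    exact by linear_combination (norm := abel) h2
  exact small_of_injective hinj

lemma aux_small_of_fg_smul_eq_bot {A : Type*} [CommRing A] {M : Type*} [AddCommGroup M]
    [Module A M] (m : Ideal A) [Small.{v} (A ⧸ m)] [Module.Finite A M]
    (hm : m • (⊤ : Submodule A M) = ⊥) : Small.{v} M := by
  have hkill : ∀ x ∈ m, ∀ y : M, x • y = 0 := by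
    intro x hx y
    have : x • y ∈ m • (⊤ : Submodule A M) := Submodule.smul_mem_smul hx trivial
    rw [hm] at this
    simpa using this
  obtain ⟨s, hs⟩ := Module.Finite.fg_top (R := A) (M := M)
  have hsurj : Function.Surjective
      (fun c : (↥s → A ⧸ m) => ∑ i ∈ s.attach, ((c i).out • (i : M))) := by
    intro x
    have hx : x ∈ Submodule.span A (s : Set M) := hs ▸ Submodule.mem_top
    obtain ⟨f, -, hf⟩ := Submodule.mem_span_finset.mp hx
    refine ⟨fun i => Ideal.Quotient.mk m (f i), ?_⟩
    have : ∀ i ∈ s.attach, ((Ideal.Quotient.mk m (f (i : M))).out • (i : M)) = f i • (i : M) := by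
      intro i _
      have hd : ((Ideal.Quotient.mk m (f (i : M))).out - f (i : M)) ∈ m := by
        rw [← Ideal.Quotient.eq]
        exact (Ideal.Quotient.mk m (f (i : M))).out_eq
      have := hkill _ hd (i : M)
      rw [sub_smul] at this
      linear_combination (norm := abel) this
    show ∑ i ∈ s.attach, ((Ideal.Quotient.mk m (f (i : M))).out • (i : M)) = x
    rw [Finset.sum_congr rfl this, ← hf, Finset.sum_attach s (fun i => f i • i)]
  exact small_of_surjective hsurj

lemma aux_small_of_fg_pow_smul_eq_bot {A : Type*} [CommRing A] [IsNoetherianRing A]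
    (m : Ideal A) [Small.{v} (A ⧸ m)] :
    ∀ (k : ℕ) (M : Type w) [AddCommGroup M] [Module A M] [Module.Finite A M],
      m ^ k • (⊤ : Submodule A M) = ⊥ → Small.{v} M := by
  intro k
  induction k with
  | zero =>
    intro M _ _ _ h
    rw [pow_zero, Ideal.one_eq_top, Submodule.top_smul] at h
    have hz : ∀ x : M, x = 0 := fun x => by
      have : x ∈ (⊥ : Submodule A M) := h ▸ Submodule.mem_top
      simpa using this
    have : Subsingleton M := ⟨fun a b => by rw [hz a, hz b]⟩
    infer_instance
  | succ k ih =>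
    intro M _ _ _ h
    haveI : IsNoetherian A M := inferInstance
    set N : Submodule A M := m • (⊤ : Submodule A M) with hN
    haveI : Module.Finite A ↥N := Module.Finite.iff_fg.mpr (IsNoetherian.noetherian N)
    have hNk : m ^ k • (⊤ : Submodule A ↥N) = ⊥ := by
      have hMN : m ^ k • N = (⊥ : Submodule A M) := by
        rw [hN, ← Submodule.smul_assoc, Ideal.smul_eq_mul, ← pow_succ]
        exact h
      rw [eq_bot_iff, Submodule.smul_le]
      rintro r hr ⟨n, hn⟩ -
      have hrn : r • n ∈ (⊥ : Submodule A M) := hMN ▸ Submodule.smul_mem_smul hr hn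
      simp only [Submodule.mem_bot] at hrn ⊢
      exact Subtype.ext (by simpa using hrn)
    haveI : Small.{v} ↥N := ih ↥N hNk
    haveI : Small.{v} (M ⧸ N) := by
      refine aux_small_of_fg_smul_eq_bot m ?_
      rw [eq_bot_iff, Submodule.smul_le]
      rintro r hr n -
      obtain ⟨y, rfl⟩ := N.mkQ_surjective n
      have : r • y ∈ N := Submodule.smul_mem_smul hr trivial
      show r • N.mkQ y = 0
      rw [← map_smul, Submodule.mkQ_apply, Submodule.Quotient.mk_eq_zero]
      exact this
    exact aux_small_of_submodule_quotient N

section PartA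

variable {R : Type u} [CommRing R] (𝔭 : Ideal R)

local notation "SS" => Localization.AtPrime 𝔭
local notation "mm" => Ideal.map (algebraMap R (Localization.AtPrime 𝔭)) 𝔭

set_option maxHeartbeats 1000000 in
lemma stmt7_injective [IsNoetherianRing R] [𝔭.IsPrime]
    (E : Type v) [AddCommGroup E] [Module SS E] [Module R E]
    [IsScalarTower R SS E] [Module.Injective SS E]
    (htors : ∀ x : E, ∃ k : ℕ,
      ((mm : Ideal SS) ^ k) ≤ (Submodule.span SS ({x} : Set E)).annihilator)
    (hκ : Small.{v} (SS ⧸ (mm : Ideal SS))) :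
    Module.Injective R E := by
  classical
  haveI hSnoeth : IsNoetherianRing SS :=
    IsLocalization.isNoetherianRing 𝔭.primeCompl SS ‹IsNoetherianRing R›
  haveI : IsNoetherian SS SS := hSnoeth
  refine Module.Baer.injective ?_
  intro I φ
  -- the localized ideal
  letI J : Ideal SS := I.localized' SS 𝔭.primeCompl (Algebra.linearMap R SS)
  letI toLoc : ↥I →ₗ[R] ↥J := I.toLocalized' SS 𝔭.primeCompl (Algebra.linearMap R SS)
  -- primeCompl acts invertibly on E
  have hunit : ∀ (x : 𝔭.primeCompl), IsUnit (algebraMap R (Module.End R E) x) := by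
    intro x
    have hu : IsUnit (algebraMap R SS x) := IsLocalization.map_units SS x
    have hmap := hu.map (Algebra.lsmul R R E)
    have heq : algebraMap R (Module.End R E) (x : R) = Algebra.lsmul R R E (algebraMap R SS x) := by
      ext e
      simp only [Module.algebraMap_end_apply, Algebra.lsmul_coe]
      rw [algebraMap_smul]
    rwa [heq]
  letI ψR : ↥J →ₗ[R] E := IsLocalizedModule.lift 𝔭.primeCompl toLoc φ hunit
  letI ψ : ↥J →ₗ[SS] E := ψR.extendScalarsOfIsLocalization 𝔭.primeCompl SS
  have hψ : ∀ (i : ↥I), ψ (toLoc i) = φ i := fun i =>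
    IsLocalizedModule.lift_apply 𝔭.primeCompl toLoc φ hunit i
  -- the range of ψ is killed by a power of mm
  have hfin : Module.Finite SS ↥J := Module.Finite.iff_fg.mpr (IsNoetherian.noetherian J)
  have hrfg : (LinearMap.range ψ).FG := by
    rw [LinearMap.range_eq_map]
    exact Submodule.FG.map ψ (Module.finite_def.mp hfin)
  obtain ⟨F, hF⟩ := hrfg
  have hkfun : ∀ y : E, ∃ k : ℕ, ∀ s ∈ ((mm : Ideal SS) ^ k), s • y = 0 := by
    intro y
    obtain ⟨k, hk⟩ := htors y
    exact ⟨k, fun s hs => (Submodule.mem_annihilator_span_singleton y s).mp (hk hs)⟩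
  choose kf hkf using hkfun
  set k : ℕ := F.sup kf with hkdef
  have hkill : ∀ s ∈ ((mm : Ideal SS) ^ k), ∀ y ∈ LinearMap.range ψ, s • y = 0 := by
    intro s hs y hy
    rw [← hF] at hy
    induction hy using Submodule.span_induction with
    | mem y hy =>
      exact hkf y s (Ideal.pow_le_pow_right (Finset.le_sup (Finset.mem_coe.mp hy)) hs)
    | zero => simp
    | add a b _ _ ha hb => rw [smul_add, ha, hb, add_zero]
    | smul c a _ ih => rw [smul_comm, ih, smul_zero]
  -- Artin–Rees
  obtain ⟨k₀, hAR⟩ := Ideal.exists_pow_inf_eq_pow_smul (mm : Ideal SS) (J : Submodule SS SS)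
  set l : ℕ := k₀ + k with hldef
  have hJl : ∀ (j : ↥J), (j : SS) ∈ ((mm : Ideal SS) ^ l) → ψ j = 0 := by
    have hsub : ((mm : Ideal SS) ^ l) ⊓ J ≤ ((mm : Ideal SS) ^ k) • (J : Submodule SS SS) := by
      have h1 := hAR l (Nat.le_add_right k₀ k)
      simp only [Ideal.smul_eq_mul, Ideal.mul_top] at h1
      have h2 : l - k₀ = k := by omega
      rw [h2] at h1
      intro x hx
      rw [Ideal.smul_eq_mul]
      rw [h1] at hx
      exact Ideal.mul_mono_right inf_le_right hx
    have hp : ∀ a ∈ (((mm : Ideal SS) ^ k) • (J : Submodule SS SS) : Submodule SS SS),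
        ∃ (ha : a ∈ J), ψ ⟨a, ha⟩ = 0 := by
      intro a haa
      refine Submodule.smul_induction_on haa ?_ ?_
      · intro r hr n hn
        refine ⟨J.smul_mem r hn, ?_⟩
        have he : (⟨r • n, J.smul_mem r hn⟩ : ↥J) = r • (⟨n, hn⟩ : ↥J) := rfl
        rw [he, map_smul]
        exact hkill r hr _ ⟨⟨n, hn⟩, rfl⟩
      · rintro x y ⟨hx, ex⟩ ⟨hy, ey⟩
        refine ⟨Submodule.add_mem J hx hy, ?_⟩
        have he : (⟨x + y, Submodule.add_mem J hx hy⟩ : ↥J) = ⟨x, hx⟩ + ⟨y, hy⟩ := rfl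
        rw [he, map_add, ex, ey, add_zero]
    intro j hj
    obtain ⟨ha, e⟩ := hp (j : SS) (hsub ⟨hj, j.2⟩)
    have he : (⟨(j : SS), ha⟩ : ↥J) = j := Subtype.ext rfl
    rwa [he] at e
  -- factor ψ through a small quotient and extend using injectivity over SS
  letI uu : ↥J →ₗ[SS] (SS ⧸ ((mm : Ideal SS) ^ l)) := ((mm : Ideal SS) ^ l).mkQ ∘ₗ J.subtype
  have hker : LinearMap.ker uu ≤ LinearMap.ker ψ := by
    intro j hj
    rw [LinearMap.mem_ker] at hj ⊢
    have hjm : (j : SS) ∈ ((mm : Ideal SS) ^ l) := by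
      rwa [LinearMap.comp_apply, Submodule.mkQ_apply, Submodule.Quotient.mk_eq_zero] at hj
    exact hJl j hjm
  letI ψ' : ↥(LinearMap.range uu) →ₗ[SS] E :=
    ((LinearMap.ker uu).liftQ ψ hker) ∘ₗ (uu.quotKerEquivRange).symm.toLinearMap
  have hψ' : ∀ (j : ↥J), ψ' ⟨uu j, LinearMap.mem_range_self uu j⟩ = ψ j := by
    intro j
    show ((LinearMap.ker uu).liftQ ψ hker) ((uu.quotKerEquivRange).symm ⟨uu j, _⟩) = ψ j
    rw [LinearMap.quotKerEquivRange_symm_apply_image]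
    exact Submodule.liftQ_apply _ ψ j
  -- smallness
  haveI hκ' : Small.{v} (SS ⧸ (mm : Ideal SS)) := hκ
  haveI hTsmall : Small.{v} (SS ⧸ ((mm : Ideal SS) ^ l)) := by
    refine aux_small_of_fg_pow_smul_eq_bot (mm : Ideal SS) l _ ?_
    rw [eq_bot_iff, Submodule.smul_le]
    rintro r hr n -
    obtain ⟨y, rfl⟩ := Submodule.Quotient.mk_surjective ((mm : Ideal SS) ^ l) n
    rw [Submodule.mem_bot, ← Submodule.Quotient.mk_smul, Submodule.Quotient.mk_eq_zero,
      smul_eq_mul]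
    exact Ideal.mul_mem_right y _ hr
  haveI hXsmall : Small.{v} ↥(LinearMap.range uu) :=
    small_of_injective (Submodule.injective_subtype (LinearMap.range uu))
  letI eT : Shrink.{v} (SS ⧸ ((mm : Ideal SS) ^ l)) ≃ₗ[SS] (SS ⧸ ((mm : Ideal SS) ^ l)) :=
    Shrink.linearEquiv SS (SS ⧸ ((mm : Ideal SS) ^ l))
  letI eX : Shrink.{v} ↥(LinearMap.range uu) ≃ₗ[SS] ↥(LinearMap.range uu) :=
    Shrink.linearEquiv SS ↥(LinearMap.range uu)
  obtain ⟨hmap, hh⟩ := Module.Injective.out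
    (eT.symm.toLinearMap ∘ₗ (LinearMap.range uu).subtype ∘ₗ eX.toLinearMap)
    (by
      simp only [LinearMap.coe_comp, LinearEquiv.coe_coe]
      exact Function.Injective.comp eT.symm.injective
        (Function.Injective.comp (Submodule.injective_subtype (LinearMap.range uu)) eX.injective))
    (ψ' ∘ₗ eX.toLinearMap)
  refine ⟨((hmap ∘ₗ eT.symm.toLinearMap ∘ₗ ((mm : Ideal SS) ^ l).mkQ).restrictScalars R) ∘ₗ
    (Algebra.linearMap R SS), ?_⟩
  intro x hx
  have hy := hh (eX.symm ⟨uu (toLoc ⟨x, hx⟩), LinearMap.mem_range_self uu (toLoc ⟨x, hx⟩)⟩)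
  simp only [LinearMap.comp_apply, LinearEquiv.coe_coe, LinearEquiv.apply_symm_apply] at hy
  have h2 : (LinearMap.range uu).subtype
      ⟨uu (toLoc ⟨x, hx⟩), LinearMap.mem_range_self uu (toLoc ⟨x, hx⟩)⟩ =
      ((mm : Ideal SS) ^ l).mkQ (algebraMap R SS x) := rfl
  rw [h2] at hy
  have h3 : ψ' ⟨uu (toLoc ⟨x, hx⟩), LinearMap.mem_range_self uu (toLoc ⟨x, hx⟩)⟩ =
      ψ (toLoc ⟨x, hx⟩) := hψ' (toLoc ⟨x, hx⟩)
  simp only [LinearMap.comp_apply, LinearMap.restrictScalars_apply, Algebra.linearMap_apply]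
  exact hy.trans (h3.trans (hψ ⟨x, hx⟩))

end PartA

/-- Let `R` be commutative Noetherian, `𝔭` a prime, `R_𝔭` the localization
and `κ(𝔭) = R_𝔭/𝔭R_𝔭`.  If `E` is an injective `R_𝔭`-module containing an essential copy of
`κ(𝔭)` via an injective `R_𝔭`-linear map `ι` (i.e. `E` is an injective hull of `κ(𝔭)` over
`R_𝔭`), then, restricting scalars along `R → R_𝔭`: (a) `E` is injective as an `R`-module,
and (b) the composite `R/𝔭 → κ(𝔭) → E` is injective with essential image, i.e. `E` is an
injective hull of `R/𝔭` over `R`. -/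
theorem stmt7 (R : Type*) [CommRing R] [IsNoetherianRing R]
    (𝔭 : Ideal R) [𝔭.IsPrime]
    (E : Type*) [AddCommGroup E]
    [Module (Localization.AtPrime 𝔭) E] [Module R E]
    [IsScalarTower R (Localization.AtPrime 𝔭) E]
    [Module.Injective (Localization.AtPrime 𝔭) E]
    (ι : (Localization.AtPrime 𝔭 ⧸
        (𝔭.map (algebraMap R (Localization.AtPrime 𝔭)) :
          Ideal (Localization.AtPrime 𝔭))) →ₗ[Localization.AtPrime 𝔭] E)
    (hι : Function.Injective ι)
    -- the image of `ι` is an essential `R_𝔭`-submodule of `E`: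
    (hess : ∀ N : Submodule (Localization.AtPrime 𝔭) E, N ≠ ⊥ →
      LinearMap.range ι ⊓ N ≠ ⊥) :
    -- (a) `E` is injective as an `R`-module
    Module.Injective R E ∧
    -- (b) the composite `R/𝔭 → κ(𝔭) → E` is injective …
    (∀ a : R,
      ι (Submodule.Quotient.mk (algebraMap R (Localization.AtPrime 𝔭) a)) = 0 ↔ a ∈ 𝔭) ∧
    -- … and its image is an essential `R`-submodule of `E`
    (∀ N : Submodule R E, N ≠ ⊥ → ∃ a : R,
      ι (Submodule.Quotient.mk (algebraMap R (Localization.AtPrime 𝔭) a)) ∈ N ∧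
      ι (Submodule.Quotient.mk (algebraMap R (Localization.AtPrime 𝔭) a)) ≠ 0) := by
  have h0 : ∀ x, ι x = 0 ↔ x = 0 := fun x =>
    ⟨fun h => hι (by rw [h, map_zero]), fun h => by rw [h, map_zero]⟩
  refine ⟨?_, ?_, ?_⟩
  · -- part (a)
    have hkillι : ∀ v ∈ LinearMap.range ι, ∀ s ∈ 𝔭.map (algebraMap R (Localization.AtPrime 𝔭)),
        s • v = 0 := by
      rintro v ⟨z, rfl⟩ s hs
      obtain ⟨w, rfl⟩ := Submodule.Quotient.mk_surjective _ z
      rw [← map_smul, ← Submodule.Quotient.mk_smul, smul_eq_mul]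
      have hz : (Submodule.Quotient.mk (s * w) : Localization.AtPrime 𝔭 ⧸
          (𝔭.map (algebraMap R (Localization.AtPrime 𝔭)) :
            Ideal (Localization.AtPrime 𝔭))) = 0 :=
        (Submodule.Quotient.mk_eq_zero _).mpr (Ideal.mul_mem_right w _ hs)
      rw [hz, map_zero]
    haveI hSnoeth : IsNoetherianRing (Localization.AtPrime 𝔭) :=
      IsLocalization.isNoetherianRing 𝔭.primeCompl _ ‹IsNoetherianRing R›
    haveI : IsNoetherian (Localization.AtPrime 𝔭) (Localization.AtPrime 𝔭) := hSnoeth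
    have hstors : ∀ s ∈ 𝔭.map (algebraMap R (Localization.AtPrime 𝔭)), ∀ x : E,
        ∃ k : ℕ, s ^ k • x = 0 := by
      intro s hs x
      by_contra hcon
      push_neg at hcon
      have hmono : Monotone (fun n : ℕ =>
          (Submodule.span (Localization.AtPrime 𝔭) ({s ^ n • x} : Set E)).annihilator) := by
        apply monotone_nat_of_le_succ
        intro n a ha
        rw [Submodule.mem_annihilator_span_singleton] at ha ⊢
        rw [pow_succ', mul_smul, smul_comm a s, ha, smul_zero]
      obtain ⟨k₀, hk₀⟩ := monotone_stabilizes_iff_noetherian.mpr inferInstance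
        (⟨_, hmono⟩ : ℕ →o Ideal (Localization.AtPrime 𝔭))
      have hz0 : s ^ k₀ • x ≠ 0 := hcon k₀
      have hsp : Submodule.span (Localization.AtPrime 𝔭) ({s ^ k₀ • x} : Set E) ≠ ⊥ := by
        simpa [Submodule.span_singleton_eq_bot] using hz0
      obtain ⟨v, hv, hv0⟩ := Submodule.exists_mem_ne_zero_of_ne_bot (hess _ hsp)
      obtain ⟨t, ht⟩ := Submodule.mem_span_singleton.mp hv.2
      have hsv : s • v = 0 := hkillι v hv.1 s hs
      have htmem : t ∈ (Submodule.span (Localization.AtPrime 𝔭)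
          ({s ^ (k₀ + 1) • x} : Set E)).annihilator := by
        rw [Submodule.mem_annihilator_span_singleton]
        rw [pow_succ', mul_smul, smul_comm t s, ht]
        exact hsv
      have h2 : (Submodule.span (Localization.AtPrime 𝔭)
          ({s ^ (k₀ + 1) • x} : Set E)).annihilator =
          (Submodule.span (Localization.AtPrime 𝔭) ({s ^ k₀ • x} : Set E)).annihilator :=
        (hk₀ (k₀ + 1) (Nat.le_succ _)).symm
      rw [h2, Submodule.mem_annihilator_span_singleton, ht] at htmem
      exact hv0 htmem
    have htors : ∀ x : E, ∃ k : ℕ,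
        ((𝔭.map (algebraMap R (Localization.AtPrime 𝔭)) :
          Ideal (Localization.AtPrime 𝔭)) ^ k) ≤
          (Submodule.span (Localization.AtPrime 𝔭) ({x} : Set E)).annihilator := by
      intro x
      have hrad : 𝔭.map (algebraMap R (Localization.AtPrime 𝔭)) ≤
          (Submodule.span (Localization.AtPrime 𝔭) ({x} : Set E)).annihilator.radical := by
        intro s hs
        obtain ⟨k, hk⟩ := hstors s hs x
        exact Ideal.mem_radical_iff.mpr
          ⟨k, (Submodule.mem_annihilator_span_singleton x (s ^ k)).mpr hk⟩
      exact Ideal.exists_pow_le_of_le_radical_of_fg hrad (IsNoetherian.noetherian _)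
    exact stmt7_injective 𝔭 E htors (small_of_injective hι)
  · -- part (b)
    intro a
    rw [h0, Submodule.Quotient.mk_eq_zero]
    rw [Localization.AtPrime.map_eq_maximalIdeal]
    exact IsLocalization.AtPrime.to_map_mem_maximal_iff _ 𝔭 a
  · -- part (c)
    intro N hN
    obtain ⟨x, hxN, hx0⟩ := Submodule.exists_mem_ne_zero_of_ne_bot hN
    have hsp : Submodule.span (Localization.AtPrime 𝔭) {x} ≠ ⊥ := by
      simpa [Submodule.span_singleton_eq_bot] using hx0
    obtain ⟨y, hy, hy0⟩ := Submodule.exists_mem_ne_zero_of_ne_bot (hess _ hsp)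
    obtain ⟨z, hz⟩ := hy.1
    obtain ⟨c, hc⟩ := Submodule.mem_span_singleton.mp hy.2
    obtain ⟨w, rfl⟩ := Submodule.Quotient.mk_surjective _ z
    obtain ⟨⟨r, s⟩, hrs : IsLocalization.mk' _ r s = c⟩ := IsLocalization.mk'_surjective 𝔭.primeCompl c
    obtain ⟨⟨a, t⟩, hat : IsLocalization.mk' _ a t = w⟩ := IsLocalization.mk'_surjective 𝔭.primeCompl w
    have hsw : algebraMap R (Localization.AtPrime 𝔭) ((s : R) * a) =
        algebraMap R (Localization.AtPrime 𝔭) ((s : R) * (t : R)) * w := by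
      rw [← hat]
      simp only [map_mul]
      rw [mul_assoc, IsLocalization.mk'_spec']
    have key1 : (Submodule.Quotient.mk (algebraMap R (Localization.AtPrime 𝔭) ((s : R) * a)) :
        Localization.AtPrime 𝔭 ⧸
          (𝔭.map (algebraMap R (Localization.AtPrime 𝔭)) :
            Ideal (Localization.AtPrime 𝔭))) =
        (algebraMap R (Localization.AtPrime 𝔭) ((s : R) * (t : R))) •
          Submodule.Quotient.mk w := by
      rw [← Submodule.Quotient.mk_smul]
      exact congrArg _ (by rw [smul_eq_mul]; exact hsw)
    have hu : IsUnit (algebraMap R (Localization.AtPrime 𝔭) ((s : R) * (t : R))) := by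
      have h1 : ((s : R) * (t : R)) = ((s * t : 𝔭.primeCompl) : R) := rfl
      rw [h1]
      exact IsLocalization.map_units _ (s * t)
    refine ⟨(s : R) * a, ?_, ?_⟩
    · -- membership
      have key2 : ι (Submodule.Quotient.mk
          (algebraMap R (Localization.AtPrime 𝔭) ((s : R) * a))) = ((t : R) * r) • x := by
        rw [key1, map_smul, hz, ← hc, ← IsScalarTower.algebraMap_smul (Localization.AtPrime 𝔭)
          ((t : R) * r) x, smul_smul]
        congr 1
        rw [← hrs]
        simp only [map_mul]
        rw [mul_comm (algebraMap R (Localization.AtPrime 𝔭) (s : R))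
          (algebraMap R (Localization.AtPrime 𝔭) (t : R)), mul_assoc, IsLocalization.mk'_spec']
      rw [key2]
      exact N.smul_mem _ hxN
    · -- nonzero
      rw [key1, map_smul, hz]
      exact fun h => hy0 (hu.smul_eq_zero.mp h)
end

section
/- Let R be a Noetherian F-finite commutative ring of characteristic p, let q = p^r, let (N, κ) be an r-Cartier module over R, and let M ⊆ N be a Cartier submodule which is ind-coherent. For any r-Cartier module (P, κ_P), write Ind(P) for the set of elements of P contained in some finitely generated Cartier submodule of P (this is a Cartier submodule of P). Then M ⊆ Ind(N), and the quotient map π : N → N/M maps Ind(N) onto Ind(N/M), where N/M carries the induced Cartier structure; i.e., the sequence 0 → M → Ind(N) → Ind(N/M) → 0 is exact. -/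
/-- An additive map commutes with finite sums. -/
private lemma kappa_sum {N : Type*} [AddCommGroup N] (κ : N → N)
    (h0 : κ 0 = 0) (hadd : ∀ x y : N, κ (x + y) = κ x + κ y)
    {ι : Type*} (s : Finset ι) (f : ι → N) :
    κ (∑ i ∈ s, f i) = ∑ i ∈ s, κ (f i) := by
  classical
  induction s using Finset.cons_induction with
  | empty => simpa using h0
  | cons i s hi ih => rw [Finset.sum_cons, Finset.sum_cons, hadd, ih]

/-- Iterated `F`-finiteness: if every element of `R` is a sum `∑ aᵢᵖ • i` over a fixed
finite set, then every element is a sum `∑ aᵢ^(pᵏ) • i` over a fixed finite set. -/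
private lemma ff_pow {p : ℕ} (hp : p.Prime) {R : Type*} [CommRing R] [CharP R p]
    (hFF : ∃ s : Finset R, ∀ x : R, ∃ a : R → R, x = ∑ i ∈ s, a i ^ p * i) (k : ℕ) :
    ∃ T : Finset R, ∀ x : R, ∃ b : R → R, x = ∑ i ∈ T, b i ^ p ^ k * i := by
  classical
  haveI : ExpChar R p := ExpChar.prime hp
  induction k with
  | zero => exact ⟨{1}, fun x => ⟨fun _ => x, by simp⟩⟩
  | succ k ih =>
    obtain ⟨T, ht⟩ := ih
    obtain ⟨s, hs⟩ := hFF
    set g : R × R → R := fun ij => ij.2 ^ p ^ k * ij.1 with hg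
    refine ⟨(T ×ˢ s).image g, fun x => ?_⟩
    obtain ⟨b, hb⟩ := ht x
    choose a ha using fun i => hs (b i)
    refine ⟨fun v => ∑ ij ∈ (T ×ˢ s).filter fun ij => g ij = v, a ij.1 ij.2, ?_⟩
    have step1 : ∀ v ∈ (T ×ˢ s).image g,
        (∑ ij ∈ (T ×ˢ s).filter fun ij => g ij = v, a ij.1 ij.2) ^ p ^ (k + 1) * v
          = ∑ ij ∈ (T ×ˢ s).filter fun ij => g ij = v,
              a ij.1 ij.2 ^ p ^ (k + 1) * g ij := by
      intro v _
      rw [sum_pow_char_pow, Finset.sum_mul]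
      refine Finset.sum_congr rfl fun ij hij => ?_
      rw [(Finset.mem_filter.mp hij).2]
    calc x = ∑ i ∈ T, b i ^ p ^ k * i := hb
      _ = ∑ i ∈ T, ∑ j ∈ s, a i j ^ p ^ (k + 1) * (j ^ p ^ k * i) := by
        refine Finset.sum_congr rfl fun i _ => ?_
        rw [ha i, sum_pow_char_pow, Finset.sum_mul]
        refine Finset.sum_congr rfl fun j _ => ?_
        have hpk : p * p ^ k = p ^ (k + 1) := (pow_succ' p k).symm
        rw [mul_pow, ← pow_mul, hpk]
        ring
      _ = ∑ ij ∈ T ×ˢ s, a ij.1 ij.2 ^ p ^ (k + 1) * g ij := by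
        rw [Finset.sum_product]
      _ = ∑ v ∈ (T ×ˢ s).image g,
            ∑ ij ∈ (T ×ˢ s).filter fun ij => g ij = v,
              a ij.1 ij.2 ^ p ^ (k + 1) * g ij :=
        (Finset.sum_fiberwise_of_maps_to (fun ij hij => Finset.mem_image_of_mem g hij) _).symm
      _ = ∑ v ∈ (T ×ˢ s).image g,
            (∑ ij ∈ (T ×ˢ s).filter fun ij => g ij = v, a ij.1 ij.2) ^ p ^ (k + 1) * v :=
        (Finset.sum_congr rfl step1).symm

/-- Let `R` be Noetherian `F`-finite of characteristic `p`, `(N, κ)` an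
`r`-Cartier module and `M ⊆ N` an ind-coherent Cartier submodule.  Writing `Ind(P)` for the
set of elements of a Cartier module `P` lying in some finitely generated Cartier submodule,
the sequence `0 → M → Ind(N) → Ind(N/M) → 0` is exact: `M ⊆ Ind(N)`, the projection
`π : N → N/M` maps `Ind(N)` into `Ind(N/M)`, and onto it. -/
theorem stmt8 (p r : ℕ) (hp : p.Prime) (hr : 1 ≤ r)
    (R : Type*) [CommRing R] [CharP R p] [IsNoetherianRing R]
    (hFF : ∃ s : Finset R, ∀ x : R, ∃ a : R → R, x = ∑ i ∈ s, a i ^ p * i)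
    (N : Type*) [AddCommGroup N] [Module R N]
    (κ : N → N)
    (hadd : ∀ x y : N, κ (x + y) = κ x + κ y)
    (hsemi : ∀ (a : R) (x : N), κ (a ^ p ^ r • x) = a • κ x)
    (M : Submodule R N) (hM : ∀ x ∈ M, κ x ∈ M)
    -- `M` with the induced Cartier structure is ind-coherent:
    (hMind : ∀ m ∈ M, ∃ P : Submodule R N, P ≤ M ∧ P.FG ∧ (∀ x ∈ P, κ x ∈ P) ∧ m ∈ P)
    -- the induced Cartier structure on the quotient `N / M`:
    (κq : (N ⧸ M) → (N ⧸ M))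
    (hκq : ∀ x : N, κq (M.mkQ x) = M.mkQ (κ x)) :
    -- `M ⊆ Ind(N)`:
    (∀ m ∈ M, ∃ P : Submodule R N, P.FG ∧ (∀ x ∈ P, κ x ∈ P) ∧ m ∈ P) ∧
    -- `π` maps `Ind(N)` into `Ind(N/M)`:
    (∀ x : N, (∃ P : Submodule R N, P.FG ∧ (∀ y ∈ P, κ y ∈ P) ∧ x ∈ P) →
      ∃ Q : Submodule R (N ⧸ M), Q.FG ∧ (∀ z ∈ Q, κq z ∈ Q) ∧ M.mkQ x ∈ Q) ∧
    -- `π` maps `Ind(N)` onto `Ind(N/M)`: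
    (∀ w : N ⧸ M, (∃ Q : Submodule R (N ⧸ M), Q.FG ∧ (∀ z ∈ Q, κq z ∈ Q) ∧ w ∈ Q) →
      ∃ x : N, (∃ P : Submodule R N, P.FG ∧ (∀ y ∈ P, κ y ∈ P) ∧ x ∈ P) ∧ M.mkQ x = w) := by
  classical
  have hκ0 : κ 0 = 0 := by
    have h := hadd 0 0
    rw [add_zero] at h
    exact left_eq_add.mp h
  have hκsum : ∀ {ι : Type} (s : Finset ι) (f : ι → N),
      κ (∑ i ∈ s, f i) = ∑ i ∈ s, κ (f i) := fun s f => kappa_sum κ hκ0 hadd s f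
  refine ⟨?_, ?_, ?_⟩
  · -- `M ⊆ Ind(N)`
    intro m hm
    obtain ⟨P, _, hfg, hκP, hmP⟩ := hMind m hm
    exact ⟨P, hfg, hκP, hmP⟩
  · -- `π` maps `Ind(N)` into `Ind(N/M)`
    rintro x ⟨P, hfg, hκP, hxP⟩
    refine ⟨P.map M.mkQ, hfg.map _, ?_, ⟨x, hxP, rfl⟩⟩
    intro z hz
    obtain ⟨y, hyP, rfl⟩ := Submodule.mem_map.mp hz
    rw [hκq]
    exact Submodule.mem_map.mpr ⟨κ y, hκP y hyP, rfl⟩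
  · -- `π` maps `Ind(N)` onto `Ind(N/M)`
    rintro w ⟨Q, hQfg, hQκ, hwQ⟩
    obtain ⟨n, g, hg⟩ := Submodule.fg_iff_exists_fin_generating_family.mp hQfg
    choose y hy using fun i => Submodule.mkQ_surjective M (g i)
    obtain ⟨T, ht⟩ := ff_pow hp hFF r
    set P0 : Submodule R N := Submodule.span R (Set.range y) with hP0
    have hmapP0 : P0.map M.mkQ = Q := by
      rw [hP0, Submodule.map_span, ← Set.range_comp,
        show (⇑M.mkQ ∘ y) = g from funext hy, hg]
    set z : Fin n × {j // j ∈ T} → N := fun k => κ ((k.2 : R) • y k.1) with hzdef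
    have hz : ∀ k, M.mkQ (z k) ∈ Q := by
      intro k
      have h1 : M.mkQ (z k) = κq (M.mkQ ((k.2 : R) • y k.1)) := (hκq _).symm
      rw [h1]
      apply hQκ
      rw [map_smul, hy]
      refine Q.smul_mem _ ?_
      rw [← hg]
      exact Submodule.subset_span ⟨k.1, rfl⟩
    -- decompose `z k = u k + m k` with `u k ∈ P0`, `m k ∈ M`
    have hzdec : ∀ k, ∃ u ∈ P0, z k - u ∈ M := by
      intro k
      have h1 : M.mkQ (z k) ∈ P0.map M.mkQ := hmapP0 ▸ hz k
      obtain ⟨u, huP0, hu⟩ := Submodule.mem_map.mp h1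
      refine ⟨u, huP0, ?_⟩
      have h2 : M.mkQ (z k - u) = 0 := by rw [map_sub, hu, sub_self]
      rwa [Submodule.mkQ_apply, Submodule.Quotient.mk_eq_zero] at h2
    choose u huP0 hm using hzdec
    choose C hCM hCfg hCκ hmC using fun k => hMind (z k - u k) (hm k)
    have hCtκ : ∀ x ∈ (⨆ k, C k : Submodule R N), κ x ∈ (⨆ k, C k : Submodule R N) := by
      intro x hx
      refine Submodule.iSup_induction (motive := fun x => κ x ∈ (⨆ k, C k : Submodule R N)) C hx
        (fun k x hx => Submodule.mem_iSup_of_mem k (hCκ k x hx))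
        (show κ 0 ∈ _ by rw [hκ0]; exact zero_mem _)
        (fun a b ha hb => show κ (a + b) ∈ _ by rw [hadd]; exact add_mem ha hb)
    set P : Submodule R N := P0 ⊔ (⨆ k, C k) with hP
    have hzP : ∀ k, z k ∈ P := by
      intro k
      have h1 : z k = u k + (z k - u k) := by abel
      rw [h1]
      exact add_mem (Submodule.mem_sup_left (huP0 k))
        (Submodule.mem_sup_right (Submodule.mem_iSup_of_mem k (hmC k)))
    have hPfg : P.FG :=
      Submodule.FG.sup (Submodule.fg_span (Set.finite_range y))
        (Submodule.fg_iSup C hCfg)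
    have key : ∀ x ∈ P0, κ x ∈ P := by
      intro x hx
      rw [hP0] at hx
      obtain ⟨c, hc⟩ := (Submodule.mem_span_range_iff_exists_fun R).mp hx
      choose b hb using fun i => ht (c i)
      have hx2 : x = ∑ i, ∑ j ∈ T.attach, b i (j : R) ^ p ^ r • ((j : R) • y i) := by
        rw [← hc]
        refine Finset.sum_congr rfl fun i _ => ?_
        rw [Finset.sum_attach T fun j => b i j ^ p ^ r • ((j : R) • y i), hb i,
          Finset.sum_smul]
        refine Finset.sum_congr rfl fun j _ => ?_
        rw [smul_smul]
      rw [hx2, kappa_sum κ hκ0 hadd]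
      refine Submodule.sum_mem _ fun i _ => ?_
      rw [kappa_sum κ hκ0 hadd]
      refine Submodule.sum_mem _ fun j _ => ?_
      rw [hsemi]
      exact Submodule.smul_mem _ _ (hzP (i, j))
    have hPκ : ∀ x ∈ P, κ x ∈ P := by
      intro x hx
      rw [hP] at hx
      obtain ⟨a, ha, c, hc, rfl⟩ := Submodule.mem_sup.mp hx
      rw [hadd]
      exact add_mem (key a ha) (Submodule.mem_sup_right (hCtκ c hc))
    have hw : w ∈ P0.map M.mkQ := hmapP0 ▸ hwQ
    obtain ⟨x, hxP0, hxw⟩ := Submodule.mem_map.mp hw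
    exact ⟨x, ⟨P, hPfg, hPκ, Submodule.mem_sup_left hxP0⟩, hxw⟩
end

section
/- Let R be a commutative ring of characteristic p, let q = p^r, and let (M, κ) be an r-Cartier module over R. Then M is a union of nilpotent Cartier submodules (i.e., of Cartier submodules on which some power of κ vanishes) if and only if for every m ∈ M there exists n ≥ 0 such that κ^n(λ • m) = 0 for all λ ∈ R. -/
/-- For an `r`-Cartier module `(M, κ)` over a commutative ring `R` of
characteristic `p`, `M` is a union of nilpotent Cartier submodules iff for every `m ∈ M`
there is `n ≥ 0` with `κ^[n] (λ • m) = 0` for all `λ ∈ R`. -/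
theorem stmt9 (p r : ℕ) (hp : p.Prime) (hr : 1 ≤ r)
    (R : Type*) [CommRing R] [CharP R p]
    (M : Type*) [AddCommGroup M] [Module R M]
    (κ : M → M)
    (hadd : ∀ x y : M, κ (x + y) = κ x + κ y)
    (hsemi : ∀ (a : R) (x : M), κ (a ^ p ^ r • x) = a • κ x) :
    (∀ m : M, ∃ N : Submodule R M,
      (∀ x ∈ N, κ x ∈ N) ∧ (∃ n : ℕ, ∀ x ∈ N, κ^[n] x = 0) ∧ m ∈ N) ↔
    (∀ m : M, ∃ n : ℕ, ∀ l : R, κ^[n] (l • m) = 0) := by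
  have h0 : κ 0 = 0 := by
    have h := hadd 0 0
    rw [add_zero] at h
    exact (add_eq_right.mp h.symm)
  have hneg : ∀ x : M, κ (-x) = -κ x := by
    intro x
    have : κ (-x) + κ x = 0 := by rw [← hadd, neg_add_cancel, h0]
    exact eq_neg_of_add_eq_zero_left this
  constructor
  · intro h m
    obtain ⟨N, _, ⟨n, hn⟩, hm⟩ := h m
    exact ⟨n, fun l => hn _ (N.smul_mem l hm)⟩
  · intro h m
    obtain ⟨n, hn⟩ := h m
    -- iterate lemmas
    have hiter0 : ∀ e : ℕ, κ^[e] 0 = 0 := fun e => Function.iterate_fixed h0 e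
    have hiteradd : ∀ (e : ℕ) (x y : M), κ^[e] (x + y) = κ^[e] x + κ^[e] y := by
      intro e
      induction e with
      | zero => simp
      | succ e ih =>
        intro x y
        rw [Function.iterate_succ_apply', Function.iterate_succ_apply',
          Function.iterate_succ_apply', ih, hadd]
    have hiterneg : ∀ (e : ℕ) (x : M), κ^[e] (-x) = -κ^[e] x := by
      intro e
      induction e with
      | zero => simp
      | succ e ih =>
        intro x
        rw [Function.iterate_succ_apply', Function.iterate_succ_apply', ih, hneg]
    have hsemiiter : ∀ (e : ℕ) (a : R) (x : M),
        κ^[e] (a ^ (p ^ r) ^ e • x) = a • κ^[e] x := by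
      intro e
      induction e with
      | zero => simp
      | succ e ih =>
        intro a x
        have hpow : a ^ (p ^ r) ^ (e + 1) = (a ^ (p ^ r) ^ e) ^ p ^ r := by
          rw [pow_succ, pow_mul]
        rw [hpow, Function.iterate_succ_apply, hsemi, ih]
        rfl
    set S : AddSubgroup M :=
      AddSubgroup.closure {x : M | ∃ (e : ℕ) (l : R), x = κ^[e] (l • m)} with hS
    have hsmul : ∀ (a : R) (x : M), x ∈ S → a • x ∈ S := by
      intro a x hx
      induction hx using AddSubgroup.closure_induction with
      | mem y hy =>
        obtain ⟨e, l, rfl⟩ := hy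
        apply AddSubgroup.subset_closure
        refine ⟨e, a ^ (p ^ r) ^ e * l, ?_⟩
        rw [mul_smul, hsemiiter]
      | zero => rw [smul_zero]; exact S.zero_mem
      | add y z _ _ hy hz => rw [smul_add]; exact S.add_mem hy hz
      | neg y _ hy => rw [smul_neg]; exact S.neg_mem hy
    refine ⟨{ carrier := S, add_mem' := fun h1 h2 => S.add_mem h1 h2,
              zero_mem' := S.zero_mem, smul_mem' := hsmul }, ?_, ⟨n, ?_⟩, ?_⟩
    · intro x hx
      induction hx using AddSubgroup.closure_induction with
      | mem y hy =>
        obtain ⟨e, l, rfl⟩ := hy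
        apply AddSubgroup.subset_closure
        exact ⟨e + 1, l, (Function.iterate_succ_apply' κ e _).symm⟩
      | zero => show κ 0 ∈ S; rw [h0]; exact S.zero_mem
      | add y z _ _ hy hz => show κ (y + z) ∈ S; rw [hadd]; exact S.add_mem hy hz
      | neg y _ hy => show κ (-y) ∈ S; rw [hneg]; exact S.neg_mem hy
    · intro x hx
      induction hx using AddSubgroup.closure_induction with
      | mem y hy =>
        obtain ⟨e, l, rfl⟩ := hy
        rw [← Function.iterate_add_apply, Nat.add_comm, Function.iterate_add_apply,
          hn, hiter0]
      | zero => exact hiter0 n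
      | add y z _ _ hy hz => rw [hiteradd, hy, hz, add_zero]
      | neg y _ hy => rw [hiterneg, hy, neg_zero]
    · exact AddSubgroup.subset_closure ⟨0, 1, by simp⟩
end

section
/- Let (R, 𝔪) be a commutative Noetherian local ring of characteristic p, let q = p^r, let M be a finitely generated R-module, and let τ : M → M be an additive map with τ(a • x) = a^q • τ(x) for all a ∈ R and x ∈ M (an r-F-module structure). Then the only element x ∈ 𝔪M with τ(x) = x is x = 0; i.e., the F-module (𝔪M, τ|_{𝔪M}) has no nonzero fixed points. -/
universe u in
/-- Same-universe version of the statement, so that Krull's intersection theorem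
(`Ideal.iInf_pow_smul_eq_bot_of_isLocalRing`) applies directly. -/
theorem stmt12_aux (p r : ℕ) (hp : p.Prime) (hr : 1 ≤ r)
    (R : Type u) [CommRing R] [IsNoetherianRing R] [IsLocalRing R]
    (M : Type u) [AddCommGroup M] [Module R M] [Module.Finite R M]
    (τ : M → M)
    (hadd : ∀ x y : M, τ (x + y) = τ x + τ y)
    (hsemi : ∀ (a : R) (x : M), τ (a • x) = a ^ p ^ r • τ x) :
    ∀ x ∈ (IsLocalRing.maximalIdeal R) • (⊤ : Submodule R M), τ x = x → x = 0 := by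
  intro x hx hfix
  set I := IsLocalRing.maximalIdeal R
  set q := p ^ r
  have hq : 2 ≤ q := by
    calc 2 ≤ p := hp.two_le
    _ = p ^ 1 := (pow_one p).symm
    _ ≤ p ^ r := Nat.pow_le_pow_right hp.pos hr
  -- key: τ maps I^k • ⊤ into I^(k*q) • ⊤
  have key : ∀ (k : ℕ) (y : M), y ∈ I ^ k • (⊤ : Submodule R M) →
      τ y ∈ I ^ (k * q) • (⊤ : Submodule R M) := by
    intro k y hy
    refine Submodule.smul_induction_on hy ?_ ?_
    · intro a ha m _
      rw [hsemi]
      refine Submodule.smul_mem_smul ?_ trivial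
      have : a ^ q ∈ (I ^ k) ^ q := Ideal.pow_mem_pow ha q
      rwa [← pow_mul] at this
    · intro y z hy hz
      rw [hadd]
      exact Submodule.add_mem _ hy hz
  have hall : ∀ n : ℕ, x ∈ I ^ (n + 1) • (⊤ : Submodule R M) := by
    intro n
    induction n with
    | zero => simpa using hx
    | succ n ih =>
      have := key (n + 1) x ih
      rw [hfix] at this
      refine Submodule.smul_mono_left (Ideal.pow_le_pow_right ?_) this
      nlinarith
  have hbot := I.iInf_pow_smul_eq_bot_of_isLocalRing (M := M)
    (IsLocalRing.maximalIdeal.isMaximal R).ne_top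
  have : x ∈ (⨅ i : ℕ, I ^ i • ⊤ : Submodule R M) := by
    rw [Submodule.mem_iInf]
    intro i
    cases i with
    | zero => simp
    | succ n => exact hall n
  rwa [hbot, Submodule.mem_bot] at this

/-- Let `(R, 𝔪)` be a commutative Noetherian local ring of characteristic
`p`, `M` a finitely generated `R`-module and `τ : M → M` an `r`-F-module structure.  Then
the only fixed point of `τ` lying in `𝔪M` is `0`. -/
theorem stmt12 (p r : ℕ) (hp : p.Prime) (hr : 1 ≤ r)
    (R : Type*) [CommRing R] [IsNoetherianRing R] [IsLocalRing R] [CharP R p]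
    (M : Type*) [AddCommGroup M] [Module R M] [Module.Finite R M]
    (τ : M → M)
    (hadd : ∀ x y : M, τ (x + y) = τ x + τ y)
    (hsemi : ∀ (a : R) (x : M), τ (a • x) = a ^ p ^ r • τ x) :
    ∀ x ∈ (IsLocalRing.maximalIdeal R) • (⊤ : Submodule R M), τ x = x → x = 0 := by
  intro x hx hfix
  -- `M` is finitely generated, hence small relative to the universe of `R`.
  obtain ⟨n, f, hf⟩ := Module.Finite.exists_fin' R M
  have hsmall : Small.{u_1} M := small_of_surjective hf
  -- Transport everything along `Shrink M ≃ₗ[R] M`, which lives in `R`'s universe.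
  let N := Shrink.{u_1} M
  let e : N ≃ₗ[R] M := Shrink.linearEquiv R M
  have hNfin : Module.Finite R N := Module.Finite.equiv e.symm
  let τ' : N → N := fun y => e.symm (τ (e y))
  have hadd' : ∀ x y : N, τ' (x + y) = τ' x + τ' y := by
    intro a b
    simp only [τ', map_add, hadd]
  have hsemi' : ∀ (a : R) (y : N), τ' (a • y) = a ^ p ^ r • τ' y := by
    intro a b
    simp only [τ', map_smul, hsemi]
  have hmem : e.symm x ∈ (IsLocalRing.maximalIdeal R) • (⊤ : Submodule R N) := by
    have : Submodule.map (e.symm : M →ₗ[R] N) ((IsLocalRing.maximalIdeal R) • (⊤ : Submodule R M)) =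
        (IsLocalRing.maximalIdeal R) • (⊤ : Submodule R N) := by
      rw [Submodule.map_smul'']
      congr 1
      exact LinearMap.range_eq_top.mpr e.symm.surjective ▸ (Submodule.map_top _)
    rw [← this]
    exact Submodule.mem_map_of_mem hx
  have hfix' : τ' (e.symm x) = e.symm x := by
    simp only [τ', LinearEquiv.apply_symm_apply, hfix]
  have := stmt12_aux p r hp hr R N τ' hadd' hsemi' (e.symm x) hmem hfix'
  have := congrArg e this
  simpa using this
end

section
/- Let S be a commutative ring of characteristic p and let z_1, …, z_n ∈ S be elements such that the monomials z^a = z_1^{a_1}⋯z_n^{a_n}, for a ranging over {0, 1, …, p−1}^n, form a basis of S regarded as a module over itself via the Frobenius x ↦ x^p; that is, every s ∈ S can be written uniquely as s = ∑_a b_a^p z^a with b_a ∈ S. Let κ : S → S be the additive map defined by κ(∑_a b_a^p z^a) = b_{(p−1, …, p−1)}. Then the map sending m ∈ S to the function s ↦ κ(s·m) is a bijection from S onto the set of all additive maps φ : S → S satisfying φ(b^p s) = b·φ(s) for all b, s ∈ S. (This is the key computation showing that such an S carries a unit Cartier module structure, i.e., F^!S ≅ S.) -/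
/-- Let `S` be a commutative ring of characteristic `p` and `z₁, …, zₙ ∈ S`
such that the monomials `z^a`, `a ∈ {0, …, p-1}ⁿ`, form a basis of `S` over itself via
Frobenius: every `s ∈ S` is uniquely `∑_a b_a^p z^a`.  Let `κ : S → S` be the additive map
with `κ (∑_a b_a^p z^a) = b_{(p-1,…,p-1)}`.  Then `m ↦ (s ↦ κ (s * m))` is a bijection from
`S` onto the set of additive maps `φ : S → S` with `φ (b^p * s) = b * φ s`, i.e. `F^! S ≅ S`. -/
theorem stmt14 (p : ℕ) (hp : p.Prime)
    (S : Type*) [CommRing S] [CharP S p]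
    (n : ℕ) (z : Fin n → S)
    -- the monomials `z^a`, `a ∈ {0, …, p-1}ⁿ`, form a Frobenius basis of `S`:
    (hbasis : ∀ s : S, ∃! b : (Fin n → Fin p) → S,
      s = ∑ a : Fin n → Fin p, b a ^ p * ∏ i : Fin n, z i ^ (a i : ℕ))
    -- the additive map `κ` sending `∑_a b_a^p z^a` to `b_{(p-1,…,p-1)}`:
    (κ : S → S)
    (hκadd : ∀ x y : S, κ (x + y) = κ x + κ y)
    (hκ : ∀ b : (Fin n → Fin p) → S,
      κ (∑ a : Fin n → Fin p, b a ^ p * ∏ i : Fin n, z i ^ (a i : ℕ)) =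
        b (fun _ => (⟨p - 1, Nat.sub_lt hp.pos Nat.one_pos⟩ : Fin p))) :
    -- `m ↦ (s ↦ κ (s * m))` lands in the set of additive `p⁻¹`-linear maps …
    (∀ m : S, (∀ x y : S, κ ((x + y) * m) = κ (x * m) + κ (y * m)) ∧
      (∀ b s : S, κ (b ^ p * s * m) = b * κ (s * m))) ∧
    -- … is injective …
    (∀ m m' : S, (∀ s : S, κ (s * m) = κ (s * m')) → m = m') ∧
    -- … and surjective onto that set:
    (∀ φ : S → S, (∀ x y : S, φ (x + y) = φ x + φ y) →
      (∀ b s : S, φ (b ^ p * s) = b * φ s) →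
      ∃ m : S, ∀ s : S, φ s = κ (s * m)) := by
  have hp1 : p - 1 < p := Nat.sub_lt hp.pos Nat.one_pos
  have hp2 : 2 ≤ p := hp.two_le
  let K : S →+ S := AddMonoidHom.mk' κ hκadd
  have hK : ∀ s : S, κ s = K s := fun _ => rfl
  -- κ of a single (reduced) monomial term
  have lemA : ∀ (u : S) (e : Fin n → ℕ), (∀ i, e i < p) →
      κ (u ^ p * ∏ i, z i ^ e i) = if (∀ i, e i = p - 1) then u else 0 := by
    intro u e he
    have h := hκ (fun a => if a = (fun i => (⟨e i, he i⟩ : Fin p)) then u else 0)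
    have hsum : (∑ a : Fin n → Fin p,
        (if a = (fun i => (⟨e i, he i⟩ : Fin p)) then u else 0) ^ p *
          ∏ i, z i ^ (a i : ℕ)) = u ^ p * ∏ i, z i ^ e i := by
      rw [Finset.sum_eq_single (fun i => (⟨e i, he i⟩ : Fin p))]
      · simp
      · intro a _ ha
        rw [if_neg ha, zero_pow hp.pos.ne', zero_mul]
      · simp
    rw [hsum] at h
    rw [h]
    by_cases hc : ∀ i, e i = p - 1
    · rw [if_pos hc, if_pos]
      funext i
      exact Fin.ext (hc i).symm
    · rw [if_neg hc, if_neg]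
      intro hcon
      exact hc fun i => (congrArg Fin.val (congrFun hcon i)).symm
  -- κ of a monomial term with exponents < 2p-1
  have natkey : ∀ a : ℕ, a ≤ 2 * p - 2 → (a % p = p - 1 ↔ a = p - 1) := by
    intro a ha
    rcases lt_or_ge a p with h | h
    · rw [Nat.mod_eq_of_lt h]
    · rw [Nat.mod_eq_sub_mod h, Nat.mod_eq_of_lt (by omega)]
      omega
  have lemH : ∀ (u : S) (f : Fin n → ℕ), (∀ i, f i ≤ 2 * p - 2) →
      κ (u ^ p * ∏ i, z i ^ f i) = if (∀ i, f i = p - 1) then u else 0 := by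
    intro u f hf
    have hsplit : (∏ i, z i ^ f i) =
        (∏ i, z i ^ (f i / p)) ^ p * ∏ i, z i ^ (f i % p) := by
      rw [← Finset.prod_pow, ← Finset.prod_mul_distrib]
      refine Finset.prod_congr rfl fun i _ => ?_
      rw [← pow_mul, ← pow_add, Nat.div_add_mod']
    rw [hsplit, ← mul_assoc, ← mul_pow,
      lemA (u * ∏ i, z i ^ (f i / p)) (fun i => f i % p)
        (fun i => Nat.mod_lt _ hp.pos)]
    by_cases hc : ∀ i, f i = p - 1
    · rw [if_pos (fun i => (natkey _ (hf i)).mpr (hc i)), if_pos hc]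
      have hq : ∀ i, f i / p = 0 := fun i => Nat.div_eq_of_lt (by rw [hc i]; omega)
      simp [hq]
    · rw [if_neg (fun hcon => hc fun i => (natkey _ (hf i)).mp (hcon i)), if_neg hc]
  -- κ of a product of two monomials with exponents < p
  have lemM : ∀ (u : S) (x y : Fin n → ℕ), (∀ i, x i < p) → (∀ i, y i < p) →
      κ (u ^ p * ((∏ i, z i ^ x i) * ∏ i, z i ^ y i)) =
        if (∀ i, x i + y i = p - 1) then u else 0 := by
    intro u x y hx hy
    have hprod : ((∏ i, z i ^ x i) * ∏ i, z i ^ y i) = ∏ i, z i ^ (x i + y i) := by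
      rw [← Finset.prod_mul_distrib]
      exact Finset.prod_congr rfl fun i _ => (pow_add _ _ _).symm
    rw [hprod, lemH u _ (fun i => by have := hx i; have := hy i; omega)]
  -- p⁻¹-linearity of κ
  have lemB : ∀ b t : S, κ (b ^ p * t) = b * κ t := by
    intro b t
    obtain ⟨c, hc, -⟩ := hbasis t
    have h1 : κ t = c (fun _ => (⟨p - 1, Nat.sub_lt hp.pos Nat.one_pos⟩ : Fin p)) := by
      rw [hc, hκ]
    have h2 : b ^ p * t =
        ∑ a : Fin n → Fin p, (b * c a) ^ p * ∏ i, z i ^ (a i : ℕ) := by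
      rw [hc, Finset.mul_sum]
      exact Finset.sum_congr rfl fun a _ => by ring
    have h3 := hκ (fun a => b * c a)
    rw [h2, h3, h1]
  -- the map is injective
  have lemZ : ∀ m : S, (∀ s : S, κ (s * m) = 0) → m = 0 := by
    intro m hm
    obtain ⟨b, hb, -⟩ := hbasis m
    have key : ∀ a : Fin n → Fin p, b a = 0 := by
      intro a
      have h := hm (∏ i, z i ^ (p - 1 - (a i : ℕ)))
      rw [mul_comm, hb, Finset.sum_mul, hK, map_sum] at h
      have hterm : ∀ c : Fin n → Fin p, c ∈ (Finset.univ : Finset (Fin n → Fin p)) →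
          K ((b c ^ p * ∏ i, z i ^ (c i : ℕ)) * ∏ i, z i ^ (p - 1 - (a i : ℕ)))
            = if c = a then b c else 0 := by
        intro c _
        rw [← hK, mul_assoc,
          lemM (b c) (fun i => (c i : ℕ)) (fun i => p - 1 - (a i : ℕ))
            (fun i => (c i).isLt) (fun i => by show p - 1 - (a i : ℕ) < p; omega)]
        refine if_congr ?_ rfl rfl
        rw [funext_iff]
        refine forall_congr' fun i => ?_
        rw [Fin.ext_iff]
        have h1 := (c i).isLt
        have h2 := (a i).isLt
        omega
      rw [Finset.sum_congr rfl hterm, Finset.sum_ite_eq' Finset.univ a b,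
        if_pos (Finset.mem_univ a)] at h
      exact h
    rw [hb]
    simp [key, zero_pow hp.pos.ne']
  refine ⟨?_, ?_, ?_⟩
  · intro m
    constructor
    · intro x y
      rw [add_mul, hκadd]
    · intro b s
      rw [mul_assoc, lemB]
  · intro m m' h
    have h0 : ∀ s : S, κ (s * (m - m')) = 0 := by
      intro s
      rw [mul_sub, hK, map_sub, ← hK, ← hK, h s, sub_self]
    exact sub_eq_zero.mp (lemZ _ h0)
  · intro φ hadd hplin
    let Φ : S →+ S := AddMonoidHom.mk' φ hadd
    have hΦ : ∀ s : S, φ s = Φ s := fun _ => rfl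
    refine ⟨∑ a : Fin n → Fin p,
      φ (∏ i, z i ^ (p - 1 - (a i : ℕ))) ^ p * ∏ i, z i ^ (a i : ℕ), ?_⟩
    set m : S := ∑ a : Fin n → Fin p,
      φ (∏ i, z i ^ (p - 1 - (a i : ℕ))) ^ p * ∏ i, z i ^ (a i : ℕ) with hm
    have hmono : ∀ e : Fin n → Fin p,
        κ ((∏ i, z i ^ (e i : ℕ)) * m) = φ (∏ i, z i ^ (e i : ℕ)) := by
      intro e
      rw [mul_comm, hm, Finset.sum_mul, hK, map_sum]
      have hterm : ∀ a : Fin n → Fin p, a ∈ (Finset.univ : Finset (Fin n → Fin p)) →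
          K ((φ (∏ i, z i ^ (p - 1 - (a i : ℕ))) ^ p * ∏ i, z i ^ (a i : ℕ)) *
              ∏ i, z i ^ (e i : ℕ))
            = if a = (fun i => (⟨p - 1 - (e i : ℕ), by omega⟩ : Fin p))
                then φ (∏ i, z i ^ (p - 1 - (a i : ℕ))) else 0 := by
        intro a _
        rw [← hK, mul_assoc,
          lemM _ (fun i => (a i : ℕ)) (fun i => (e i : ℕ))
            (fun i => (a i).isLt) (fun i => (e i).isLt)]
        refine if_congr ?_ rfl rfl
        rw [funext_iff]
        refine forall_congr' fun i => ?_
        rw [Fin.ext_iff]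
        have h1 := (a i).isLt
        have h2 := (e i).isLt
        simp only []
        omega
      rw [Finset.sum_congr rfl hterm,
        Finset.sum_ite_eq' Finset.univ _
          (fun a : Fin n → Fin p => φ (∏ i, z i ^ (p - 1 - (a i : ℕ)))),
        if_pos (Finset.mem_univ _)]
      congr 1
      refine Finset.prod_congr rfl fun i _ => ?_
      congr 1
      have h2 := (e i).isLt
      simp only []
      omega
    intro s
    obtain ⟨c, hc, -⟩ := hbasis s
    calc φ s = ∑ e : Fin n → Fin p, c e * φ (∏ i, z i ^ (e i : ℕ)) := by
          rw [hc, hΦ, map_sum]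
          exact Finset.sum_congr rfl fun e _ => by rw [← hΦ, hplin]
      _ = ∑ e : Fin n → Fin p, κ ((c e ^ p * ∏ i, z i ^ (e i : ℕ)) * m) := by
          refine Finset.sum_congr rfl fun e _ => ?_
          rw [mul_assoc, lemB, hmono]
      _ = κ (s * m) := by
          rw [hc, Finset.sum_mul, hK, map_sum]
          exact Finset.sum_congr rfl fun e _ => (hK _).symm ▸ rfl
end

section
/- Let k be an algebraically closed field of characteristic p and let q = p^r for some r ≥ 1. Then the quotient of the additive group of the polynomial ring k[t] by the subgroup {f^q − f : f ∈ k[t]} is infinite. (Consequently, the Artin–Schreier cokernel H^1(𝔸^1_{k,ét}, 𝔽_q) = coker(F − 1 : k[t] → k[t]) is an infinite-dimensional 𝔽_q-vector space.) -/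
/-- Let `k` be an algebraically closed field of characteristic `p` and
`q = p^r`, `r ≥ 1`.  The quotient of the additive group of `k[t]` by the subgroup
`{f^q − f : f ∈ k[t]}` is infinite (the Artin–Schreier cokernel
`H¹(𝔸¹_{k,ét}, 𝔽_q) = coker (F − 1 : k[t] → k[t])` is infinite-dimensional over `𝔽_q`). -/
theorem stmt15 (p r : ℕ) (hp : p.Prime) (hr : 1 ≤ r)
    (k : Type*) [Field k] [IsAlgClosed k] [CharP k p]
    (H : AddSubgroup (Polynomial k))
    (hH : ∀ x : Polynomial k, x ∈ H ↔ ∃ f : Polynomial k, f ^ p ^ r - f = x) :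
    Infinite (Polynomial k ⧸ H) := by
  set q := p ^ r with hqdef
  have hq2 : 2 ≤ q := by
    calc 2 ≤ p := hp.two_le
    _ ≤ p ^ r := Nat.le_self_pow (by omega) p
  have key : Function.Injective
      (fun n : ℕ => (QuotientAddGroup.mk (Polynomial.X ^ (q * n + 1)) : Polynomial k ⧸ H)) := by
    intro m n hmn
    by_contra hne
    wlog hlt : n < m generalizing m n
    · exact this hmn.symm (Ne.symm hne) (by omega)
    simp only [QuotientAddGroup.eq_iff_sub_mem] at hmn
    obtain ⟨f, hf⟩ := (hH _).1 hmn
    have hXdeg : (Polynomial.X ^ (q * m + 1) - Polynomial.X ^ (q * n + 1)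
        : Polynomial k).natDegree = q * m + 1 := by
      rw [Polynomial.natDegree_sub_eq_left_of_natDegree_lt, Polynomial.natDegree_X_pow]
      rw [Polynomial.natDegree_X_pow, Polynomial.natDegree_X_pow]
      have : q * n < q * m := Nat.mul_lt_mul_of_pos_left hlt (by omega)
      omega
    rcases Nat.eq_zero_or_pos f.natDegree with h0 | hpos
    · have hc : (f ^ q - f).natDegree = 0 := by
        refine Nat.le_zero.mp (le_trans (Polynomial.natDegree_sub_le _ _) ?_)
        simp [Polynomial.natDegree_pow, h0]
      rw [hf, hXdeg] at hc
      omega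
    · have h1 : (f ^ q).natDegree = q * f.natDegree := Polynomial.natDegree_pow f q
      have h2 : f.natDegree < (f ^ q).natDegree := by rw [h1]; nlinarith
      have h3 : (f ^ q - f).natDegree = q * f.natDegree := by
        rw [Polynomial.natDegree_sub_eq_left_of_natDegree_lt h2, h1]
      rw [hf, hXdeg] at h3
      have hdvd : q ∣ q * m + 1 := h3 ▸ dvd_mul_right q f.natDegree
      have hone : q ∣ 1 := (Nat.dvd_add_right (dvd_mul_right q m)).mp hdvd
      exact absurd (Nat.le_of_dvd one_pos hone) (by omega)
  exact Infinite.of_injective _ key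
end
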